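/- arXiv:1605.00311 — 3 statements merged into one kernel-verified Lean document; each statement's English description precedes it below -/
import Mathlib

section
/- Assume (H1)–(H4). Then there exist constants C' > 0, ε̃ > 0, θ̂ ∈ (0,1) and real numbers (σ_j)_{j≥0} such that: (i) for every j ≥ 0 and every K ≥ 1 with j ≤ ε̃ K one has |b_{K,j} − σ_j| ≤ C' K^{2−s} (in particular σ_j = lim_{K→∞} b_{K,j}); and (ii) |σ_j| ≤ C' θ̂^j for all j ≥ 0. -/
open MeasureTheory ProbabilityTheory Filter Topology

section Aux

variable {Ω : Type*} {m0 : MeasurableSpace Ω} {μ : Measure Ω} [IsProbabilityMeasure μ]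
set_option linter.unusedSectionVars false
set_option linter.unusedVariables false

lemma aux_integrable_of_bound {f : Ω → ℝ} {B : ℝ} (hf : AEStronglyMeasurable f μ)
    (hB : ∀ᵐ ω ∂μ, |f ω| ≤ B) : Integrable f μ :=
  Integrable.mono' (integrable_const B) hf (by simpa [Real.norm_eq_abs] using hB)

lemma aux_abs_integral_le {f : Ω → ℝ} (hf : Integrable f μ) :
    |∫ ω, f ω ∂μ| ≤ ∫ ω, |f ω| ∂μ := by
  simpa [Real.norm_eq_abs] using norm_integral_le_integral_norm f (μ := μ)

/-- bound `|∫ f·g|` by `B * ∫|f|` when `|g| ≤ B` a.e. -/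
lemma aux_abs_integral_mul_le {f g : Ω → ℝ} (hf : Integrable f μ)
    (hg : AEStronglyMeasurable g μ) {B : ℝ} (hB : 0 ≤ B)
    (hgB : ∀ᵐ ω ∂μ, |g ω| ≤ B) :
    |∫ ω, f ω * g ω ∂μ| ≤ B * ∫ ω, |f ω| ∂μ := by
  have hint : Integrable (fun ω => f ω * g ω) μ := by
    have := Integrable.bdd_mul (f := g) (g := f) (c := B) hf hg
      (by simpa [Real.norm_eq_abs] using hgB)
    simpa [mul_comm] using this
  calc |∫ ω, f ω * g ω ∂μ| ≤ ∫ ω, |f ω * g ω| ∂μ := aux_abs_integral_le hint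
    _ ≤ ∫ ω, B * |f ω| ∂μ := by
        refine integral_mono_ae hint.abs (hf.abs.const_mul B) ?_
        filter_upwards [hgB] with ω hω
        calc |f ω * g ω| = |f ω| * |g ω| := abs_mul _ _
          _ ≤ |f ω| * B := mul_le_mul_of_nonneg_left hω (abs_nonneg _)
          _ = B * |f ω| := mul_comm _ _
    _ = B * ∫ ω, |f ω| ∂μ := integral_const_mul _ _

lemma aux_condexp_abs_le {m : MeasurableSpace Ω} (hm : m ≤ m0)
    {f : Ω → ℝ} {B : ℝ} (hf : Integrable f μ) (hB : ∀ᵐ ω ∂μ, |f ω| ≤ B) :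
    ∀ᵐ ω ∂μ, |(μ[f|m]) ω| ≤ B := by
  have h1 : μ[f|m] ≤ᵐ[μ] μ[(fun _ => B : Ω → ℝ)|m] :=
    condExp_mono hf (integrable_const B) (by filter_upwards [hB] with ω hω using (abs_le.1 hω).2)
  have h2 : μ[(fun _ => -B : Ω → ℝ)|m] ≤ᵐ[μ] μ[f|m] :=
    condExp_mono (integrable_const (-B)) hf
      (by filter_upwards [hB] with ω hω using (abs_le.1 hω).1)
  have e1 := condExp_const hm B (μ := μ)
  have e2 := condExp_const hm (-B) (μ := μ)
  filter_upwards [h1, h2] with ω hω1 hω2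
  rw [e1] at hω1; rw [e2] at hω2
  exact abs_le.2 ⟨hω2, hω1⟩

/-- split an integral bound over a good set and its complement -/
lemma aux_split_bound {f : Ω → ℝ} {G : Set Ω} (hG : MeasurableSet G)
    (hf : Integrable f μ) {a c : ℝ} (ha : 0 ≤ a) (hc : 0 ≤ c)
    (hfa : ∀ᵐ ω ∂μ, ω ∈ G → |f ω| ≤ a) (hfc : ∀ᵐ ω ∂μ, |f ω| ≤ c) :
    |∫ ω, f ω ∂μ| ≤ a + c * (μ Gᶜ).toReal := by
  have hind : Integrable (fun ω => a + Set.indicator Gᶜ (fun _ => c) ω) μ := by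
    refine (integrable_const a).add ?_
    exact (integrable_const c).indicator hG.compl
  have hle : ∀ᵐ ω ∂μ, |f ω| ≤ a + Set.indicator Gᶜ (fun _ => c) ω := by
    filter_upwards [hfa, hfc] with ω h1 h2
    by_cases hω : ω ∈ G
    · simpa [Set.indicator_of_notMem (by simpa using hω : ω ∉ Gᶜ)] using h1 hω
    · rw [Set.indicator_of_mem (by simpa using hω) (fun _ => c)]
      exact h2.trans (by linarith)
  calc |∫ ω, f ω ∂μ| ≤ ∫ ω, |f ω| ∂μ := aux_abs_integral_le hf
    _ ≤ ∫ ω, (a + Set.indicator Gᶜ (fun _ => c) ω) ∂μ := integral_mono_ae hf.abs hind hle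
    _ = a + c * (μ Gᶜ).toReal := by
        rw [integral_add (integrable_const a) ((integrable_const c).indicator hG.compl),
          integral_const, integral_indicator_const _ hG.compl]
        simp [mul_comm, Measure.real]


/-- A function approximated in outer measure by measurable functions is a.e. strongly
measurable. -/
lemma aux_aesm_of_approx {f : Ω → ℝ} {g : ℕ → Ω → ℝ} {θ : ℝ}
    (hθ : θ ∈ Set.Ioo (0:ℝ) 1)
    (hg : ∀ k, AEStronglyMeasurable (g k) μ) {c : ℝ}
    (h : ∀ k, μ {ω | θ ^ k ≤ |f ω - g k ω|} ≤ ENNReal.ofReal (c * θ ^ k)) :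
    AEStronglyMeasurable f μ := by
  obtain ⟨hθ0, hθ1⟩ := hθ
  have hgeo : ∑' k : ℕ, (ENNReal.ofReal (max c 0) * (ENNReal.ofReal θ) ^ k) ≠ ⊤ := by
    rw [ENNReal.tsum_mul_left, ENNReal.tsum_geometric]
    refine ENNReal.mul_ne_top ENNReal.ofReal_ne_top ?_
    rw [ENNReal.inv_ne_top]
    have h1 : ENNReal.ofReal θ < 1 := by
      rw [← ENNReal.ofReal_one]
      exact ENNReal.ofReal_lt_ofReal_iff_of_nonneg hθ0.le |>.2 hθ1
    simpa [tsub_eq_zero_iff_le] using h1.not_ge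
  have hsum : ∑' k, μ {ω | θ ^ k ≤ |f ω - g k ω|} ≠ ⊤ := by
    refine ne_top_of_le_ne_top hgeo (ENNReal.tsum_le_tsum fun k => (h k).trans ?_)
    rw [← ENNReal.ofReal_pow hθ0.le, ← ENNReal.ofReal_mul (le_max_right _ _)]
    exact ENNReal.ofReal_le_ofReal
      (mul_le_mul_of_nonneg_right (le_max_left _ _) (pow_nonneg hθ0.le _))
  have hnull := measure_setOf_frequently_eq_zero (p := fun k ω => θ ^ k ≤ |f ω - g k ω|) hsum
  have hae : ∀ᵐ ω ∂μ, ∀ᶠ k in atTop, |f ω - g k ω| < θ ^ k := by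
    rw [ae_iff]
    convert hnull using 2 with ω
    simp only [Filter.not_eventually, not_lt, Filter.frequently_atTop]
  have htend : ∀ᵐ ω ∂μ, Tendsto (fun k => g k ω) atTop (𝓝 (f ω)) := by
    filter_upwards [hae] with ω hω
    rw [tendsto_iff_dist_tendsto_zero]
    refine squeeze_zero' (Eventually.of_forall fun k => dist_nonneg) ?_
      (tendsto_pow_atTop_nhds_zero_of_lt_one hθ0.le hθ1)
    filter_upwards [hω] with k hk
    rw [Real.dist_eq, abs_sub_comm]
    exact hk.le
  exact aestronglyMeasurable_of_tendsto_ae atTop hg htend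

/-- An `L¹` bound from an outer-measure tail bound plus an a.e. sup bound. -/
lemma aux_L1_of_prob {f : Ω → ℝ} (hf : Integrable f μ) {B δ ε : ℝ} (hB : 0 ≤ B)
    (hδ : 0 ≤ δ) (hε : 0 ≤ ε) (hbd : ∀ᵐ ω ∂μ, |f ω| ≤ B)
    (hprob : μ {ω | δ ≤ |f ω|} ≤ ENNReal.ofReal ε) :
    ∫ ω, |f ω| ∂μ ≤ δ + B * ε := by
  obtain ⟨T, hsub, hTmeas, hTeq⟩ := exists_measurable_superset μ {ω | δ ≤ |f ω|}
  have hμT : (μ T).toReal ≤ ε := by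
    rw [hTeq]
    exact ENNReal.toReal_le_of_le_ofReal hε hprob
  have hle : ∀ᵐ ω ∂μ, |f ω| ≤ δ + Set.indicator T (fun _ => B) ω := by
    filter_upwards [hbd] with ω hω
    by_cases hT : ω ∈ T
    · rw [Set.indicator_of_mem hT]
      linarith
    · rw [Set.indicator_of_notMem hT]
      have : ω ∉ {ω | δ ≤ |f ω|} := fun hmem => hT (hsub hmem)
      simp only [Set.mem_setOf_eq, not_le] at this
      linarith
  have hind : Integrable (fun ω => δ + Set.indicator T (fun _ => B) ω) μ :=
    (integrable_const δ).add ((integrable_const B).indicator hTmeas)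
  calc ∫ ω, |f ω| ∂μ ≤ ∫ ω, (δ + Set.indicator T (fun _ => B) ω) ∂μ :=
        integral_mono_ae hf.abs hind hle
    _ = δ + (μ T).toReal * B := by
        rw [integral_add (integrable_const δ) ((integrable_const B).indicator hTmeas),
          integral_const, integral_indicator_const _ hTmeas]
        simp [Measure.real]
    _ ≤ δ + B * ε := by
        have := mul_le_mul_of_nonneg_left hμT hB
        linarith [this, mul_comm (μ T).toReal B]

end Aux

/-- polynomial times geometric is bounded -/
lemma aux_polygeom {q A B u : ℝ} (hq0 : 0 < q) (hq1 : q < 1) (hA : 1 ≤ A) (hB : 0 ≤ B)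
    (hu : 0 ≤ u) : ∃ c : ℝ, 0 < c ∧ ∀ j : ℕ, (A + B * j) ^ u * q ^ j ≤ c := by
  set d := ⌈u⌉₊ with hd
  have hψ : Tendsto (fun n : ℕ => (n : ℝ) ^ d * q ^ n) atTop (𝓝 0) :=
    tendsto_pow_const_mul_const_pow_of_abs_lt_one d (by rw [abs_of_pos hq0]; exact hq1)
  have hφ : Tendsto (fun j : ℕ => ((j : ℝ) + 1) ^ d * q ^ j) atTop (𝓝 0) := by
    have h2 : Tendsto (fun j : ℕ => ((j + 1 : ℕ) : ℝ) ^ d * q ^ (j + 1)) atTop (𝓝 0) :=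
      hψ.comp (tendsto_add_atTop_nat 1)
    have := h2.const_mul (1 / q)
    rw [mul_zero] at this
    refine this.congr fun j => ?_
    push_cast
    field_simp
    ring
  obtain ⟨c₀, hc₀⟩ := hφ.bddAbove_range
  have hc₀' : ∀ j : ℕ, ((j : ℝ) + 1) ^ d * q ^ j ≤ c₀ := fun j => hc₀ ⟨j, rfl⟩
  refine ⟨max ((A + B) ^ d * c₀) 1, lt_of_lt_of_le one_pos (le_max_right _ _), fun j => ?_⟩
  have hbase1 : (1:ℝ) ≤ A + B * j :=
    le_add_of_le_of_nonneg hA (mul_nonneg hB (Nat.cast_nonneg j))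
  have hbase2 : A + B * j ≤ (A + B) * (j + 1) := by nlinarith [Nat.cast_nonneg (α := ℝ) j]
  have step1 : (A + B * j) ^ u ≤ ((A + B) * (j + 1)) ^ d := by
    calc (A + B * j) ^ u ≤ ((A + B) * ((j:ℝ) + 1)) ^ u :=
          Real.rpow_le_rpow (by linarith) hbase2 hu
      _ ≤ ((A + B) * ((j:ℝ) + 1)) ^ (d : ℝ) :=
          Real.rpow_le_rpow_of_exponent_le (le_trans hbase1 hbase2) (Nat.le_ceil u)
      _ = ((A + B) * ((j:ℝ) + 1)) ^ d := Real.rpow_natCast _ d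
  calc (A + B * j) ^ u * q ^ j ≤ ((A + B) * ((j:ℝ) + 1)) ^ d * q ^ j := by
        exact mul_le_mul_of_nonneg_right step1 (pow_nonneg hq0.le j)
    _ = (A + B) ^ d * (((j:ℝ) + 1) ^ d * q ^ j) := by rw [mul_pow]; ring
    _ ≤ (A + B) ^ d * c₀ := by
        refine mul_le_mul_of_nonneg_left (hc₀' j) (pow_nonneg (by linarith) d)
    _ ≤ max ((A + B) ^ d * c₀) 1 := le_max_left _ _

/-- convert `θ ^ (k:ℕ)` to `rpow` comparison -/
lemma aux_pow_le_rpow {θ : ℝ} (hθ0 : 0 < θ) (hθ1 : θ ≤ 1) {k : ℕ} {x : ℝ} (hx : x ≤ k) :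
    θ ^ k ≤ θ ^ x := by
  rw [← Real.rpow_natCast θ k]
  exact Real.rpow_le_rpow_of_exponent_ge hθ0 hθ1 hx


set_option maxHeartbeats 1000000 in
/-- Under (H1)–(H4) there are `C' > 0`, `ε̃ > 0`, `θ̂ ∈ (0,1)` and reals `σ_j` such that
`|b_{K,j} − σ_j| ≤ C' K^{2−s}` whenever `j ≤ ε̃ K` (so `σ_j = lim_{K→∞} b_{K,j}`), and
`|σ_j| ≤ C' θ̂^j` for all `j`. -/
theorem b_limit_exists
    {Ω : Type*} [MeasurableSpace Ω] (μ : MeasureTheory.Measure Ω) [IsProbabilityMeasure μ]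
    (C u θ s : ℝ) (hC : 0 < C) (hu : 0 < u) (hθ : θ ∈ Set.Ioo (0:ℝ) 1) (hs : 2 < s)
    (ξ : ℕ → Ω → ℝ) (hξ : ∀ n, Integrable (ξ n) μ)
    (ξhat : ℕ → Ω → ℝ) (hξhat : ∀ n ω, ξhat n ω = ξ n ω - ∫ ω', ξ n ω' ∂μ)
    (ξK : ℝ → ℕ → Ω → ℝ)
    (ξhatK : ℝ → ℕ → Ω → ℝ)
    (hξhatK : ∀ K n ω, ξhatK K n ω = ξK K n ω - ∫ ω', ξK K n ω' ∂μ)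
    -- (H1)
    (H1a : ∀ K, 1 ≤ K → ∀ n, ∀ᵐ ω ∂μ, |ξK K n ω| ≤ K)
    (H1b1 : ∀ K, 1 ≤ K → ∀ n, ∫ ω, |ξK K n ω - ξ n ω| ∂μ ≤ C * K ^ (1 - s))
    (H1b2 : ∀ K, 1 ≤ K → ∀ n, ∫ ω, (ξK K n ω - ξ n ω) ^ 2 ∂μ ≤ C * K ^ (2 - s))
    -- (H2)
    (F : ℕ → MeasurableSpace Ω) (hFmono : Monotone F) (hFle : ∀ l, F l ≤ ‹MeasurableSpace Ω›)
    (ξapp : ℝ → ℕ → ℕ → Ω → ℝ)   -- `ξapp K l k` is the variable `ξ_{l, l+k}^K`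
    (H2meas : ∀ K l k, 1 ≤ K → Measurable[F (l + k)] (ξapp K l k))
    (H2bdd : ∀ K l k, 1 ≤ K → ∀ᵐ ω ∂μ, |ξapp K l k ω| ≤ K)
    (H2exp : ∀ K l k, 1 ≤ K → ∫ ω, ξapp K l k ω ∂μ = ∫ ω, ξK K l ω ∂μ)
    (H2prob : ∀ K l k, 1 ≤ K →
      μ {ω | θ ^ k ≤ |ξK K l ω - ξapp K l k ω|} ≤
        ENNReal.ofReal (C * K ^ u * ((l : ℝ) + 1) ^ u * θ ^ k))
    -- (H3)
    (G : ℕ → ℕ → Set Ω) (hGmeas : ∀ l k, MeasurableSet (G l k))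
    (H3prob : ∀ l k, μ (G l k)ᶜ ≤ ENNReal.ofReal (C * θ ^ k))
    (H3 : ∀ K l k, 1 ≤ K → ∀ᵐ ω ∂μ, ω ∈ G l k →
      |(μ[ξhatK K (l + k)|F l]) ω| ≤ C * ((l : ℝ) + 1) ^ u * K ^ u * θ ^ k)
    -- (H4)
    (b : ℝ → ℕ → ℝ)
    (H4 : ∀ K l k k', 1 ≤ K → k ≤ k' → ∀ᵐ ω ∂μ, ω ∈ G l k →
      |(μ[fun ω' => ξhatK K (l + k) ω' * ξhatK K (l + k') ω'|F l]) ω - b K (k' - k)| ≤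
        C * ((l : ℝ) + 1) ^ u * K ^ u * Real.exp (u * ((k' : ℝ) - k)) * θ ^ k)
    :
    ∃ C' : ℝ, 0 < C' ∧ ∃ εt : ℝ, 0 < εt ∧ ∃ θh : ℝ, θh ∈ Set.Ioo (0:ℝ) 1 ∧
      ∃ σs : ℕ → ℝ,
        (∀ (j : ℕ) (K : ℝ), 1 ≤ K → (j : ℝ) ≤ εt * K →
          |b K j - σs j| ≤ C' * K ^ (2 - s)) ∧
        (∀ j, Tendsto (fun K : ℝ => b K j) atTop (𝓝 (σs j))) ∧
        (∀ j : ℕ, |σs j| ≤ C' * θh ^ j) := by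
  clear hξhat H1b2
  obtain ⟨hθ0, hθ1⟩ := hθ
  have hC0 : (0:ℝ) ≤ C := hC.le
  -- abbreviation for the correlation integrals
  set D : ℕ → ℕ → ℝ → ℝ := fun n j K => ∫ ω, ξhatK K n ω * ξhatK K (n + j) ω ∂μ with hDdef
  -- measurability and integrability of the truncations
  have haesm : ∀ K, 1 ≤ K → ∀ n, AEStronglyMeasurable (ξK K n) μ := by
    intro K hK n
    exact aux_aesm_of_approx ⟨hθ0, hθ1⟩
      (fun k => ((H2meas K n k hK).mono (hFle _) le_rfl).aestronglyMeasurable)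
      (c := C * K ^ u * ((n : ℝ) + 1) ^ u) (fun k => H2prob K n k hK)
  have hintK : ∀ K, 1 ≤ K → ∀ n, Integrable (ξK K n) μ := fun K hK n =>
    aux_integrable_of_bound (haesm K hK n) (H1a K hK n)
  have habs_int : ∀ K, 1 ≤ K → ∀ n, |∫ ω, ξK K n ω ∂μ| ≤ K := by
    intro K hK n
    calc |∫ ω, ξK K n ω ∂μ| ≤ ∫ ω, |ξK K n ω| ∂μ := aux_abs_integral_le (hintK K hK n)
      _ ≤ ∫ _ω, K ∂μ := integral_mono_ae (hintK K hK n).abs (integrable_const K) (H1a K hK n)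
      _ = K := by simp
  have hhatK_eq : ∀ K n, ξhatK K n = fun ω => ξK K n ω - ∫ ω', ξK K n ω' ∂μ := fun K n =>
    funext (hξhatK K n)
  have hint_hat : ∀ K, 1 ≤ K → ∀ n, Integrable (ξhatK K n) μ := by
    intro K hK n
    rw [hhatK_eq]
    exact (hintK K hK n).sub (integrable_const _)
  have hbd_hat : ∀ K, 1 ≤ K → ∀ n, ∀ᵐ ω ∂μ, |ξhatK K n ω| ≤ 2 * K := by
    intro K hK n
    filter_upwards [H1a K hK n] with ω hω
    rw [hξhatK]
    calc |ξK K n ω - ∫ ω', ξK K n ω' ∂μ| ≤ |ξK K n ω| + |∫ ω', ξK K n ω' ∂μ| := abs_sub _ _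
      _ ≤ K + K := add_le_add hω (habs_int K hK n)
      _ = 2 * K := by ring
  have hint_prod : ∀ K, 1 ≤ K → ∀ n m', Integrable (fun ω => ξhatK K n ω * ξhatK K m' ω) μ := by
    intro K hK n m'
    exact Integrable.bdd_mul (c := 2 * K) (hint_hat K hK m')
      (hint_hat K hK n).aestronglyMeasurable
      (by simpa [Real.norm_eq_abs] using hbd_hat K hK n)
  have hbd_prod : ∀ K, 1 ≤ K → ∀ n m', ∀ᵐ ω ∂μ, |ξhatK K n ω * ξhatK K m' ω| ≤ 4 * K ^ 2 := by
    intro K hK n m'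
    filter_upwards [hbd_hat K hK n, hbd_hat K hK m'] with ω h1 h2
    rw [abs_mul]
    calc |ξhatK K n ω| * |ξhatK K m' ω| ≤ (2 * K) * (2 * K) :=
          mul_le_mul h1 h2 (abs_nonneg _) (by positivity)
      _ = 4 * K ^ 2 := by ring
  have hGc : ∀ l k, (μ (G l k)ᶜ).toReal ≤ C * θ ^ k := fun l k =>
    ENNReal.toReal_le_of_le_ofReal (by positivity) (H3prob l k)
  -- Step 1: `D n j K` approximates `b K j` with error `O(θ^n)`
  have h1 : ∀ K, 1 ≤ K → ∀ j n, |D n j K - b K j| ≤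
      (C * K ^ u * Real.exp (u * j) + (4 * K ^ 2 + |b K j|) * C) * θ ^ n := by
    intro K hK j n
    have hprod := hint_prod K hK n (n + j)
    have hDeq : ∫ ω, (μ[fun ω' => ξhatK K n ω' * ξhatK K (n + j) ω'|F 0]) ω ∂μ = D n j K :=
      integral_condExp (hFle 0)
    have hcondbd : ∀ᵐ ω ∂μ, |(μ[fun ω' => ξhatK K n ω' * ξhatK K (n + j) ω'|F 0]) ω| ≤
        4 * K ^ 2 := aux_condexp_abs_le (hFle 0) hprod (hbd_prod K hK n (n + j))
    have hH4 := H4 K 0 n (n + j) hK (Nat.le_add_right n j)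
    simp only [Nat.zero_add, Nat.add_sub_cancel_left] at hH4
    have hbdeq : C * (((0:ℕ) : ℝ) + 1) ^ u * K ^ u *
        Real.exp (u * (((n + j : ℕ) : ℝ) - ((n : ℕ) : ℝ))) * θ ^ n
        = C * K ^ u * Real.exp (u * (j : ℝ)) * θ ^ n := by
      push_cast
      rw [show (0:ℝ) + 1 = 1 by ring, Real.one_rpow]
      ring_nf
    rw [hbdeq] at hH4
    have hsplit := aux_split_bound (μ := μ) (hGmeas 0 n)
      ((integrable_condExp).sub (integrable_const (b K j)))
      (a := C * K ^ u * Real.exp (u * (j : ℝ)) * θ ^ n) (c := 4 * K ^ 2 + |b K j|)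
      (by positivity) (by positivity)
      (by filter_upwards [hH4] with ω hω hmem using hω hmem)
      (by filter_upwards [hcondbd] with ω hω; exact (abs_sub _ _).trans (by linarith))
    have hint_eq : ∫ ω, ((μ[fun ω' => ξhatK K n ω' * ξhatK K (n + j) ω'|F 0]) ω - b K j) ∂μ
        = D n j K - b K j := by
      rw [integral_sub integrable_condExp (integrable_const _), hDeq, integral_const]
      simp
    simp only [Pi.sub_apply] at hsplit
    rw [hint_eq] at hsplit
    calc |D n j K - b K j| ≤ C * K ^ u * Real.exp (u * (j:ℝ)) * θ ^ n
          + (4 * K ^ 2 + |b K j|) * (μ (G 0 n)ᶜ).toReal := hsplit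
      _ ≤ C * K ^ u * Real.exp (u * (j:ℝ)) * θ ^ n + (4 * K ^ 2 + |b K j|) * (C * θ ^ n) := by
          have h4 : (0:ℝ) ≤ 4 * K ^ 2 + |b K j| := by positivity
          exact add_le_add_right (mul_le_mul_of_nonneg_left (hGc 0 n) h4) _
      _ = (C * K ^ u * Real.exp (u * j) + (4 * K ^ 2 + |b K j|) * C) * θ ^ n := by ring
  -- Step 2: comparison of `D` for different truncation levels
  have h2 : ∀ K K', 1 ≤ K → K ≤ K' → K' ≤ 2 * K → ∀ j n,
      |D n j K - D n j K'| ≤ 24 * C * K ^ (2 - s) := by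
    have hL1hat : ∀ K K' : ℝ, 1 ≤ K → 1 ≤ K' → ∀ n,
        ∫ ω, |ξhatK K n ω - ξhatK K' n ω| ∂μ ≤ 2 * (C * K ^ (1 - s) + C * K' ^ (1 - s)) := by
      intro K K' hK hK' n
      have hint1 : Integrable (fun ω => ξK K n ω - ξ n ω) μ := (hintK K hK n).sub (hξ n)
      have hint2 : Integrable (fun ω => ξK K' n ω - ξ n ω) μ := (hintK K' hK' n).sub (hξ n)
      set c1 : ℝ := ∫ ω', ξK K n ω' ∂μ with hc1
      set c2 : ℝ := ∫ ω', ξK K' n ω' ∂μ with hc2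
      have hcc : |c1 - c2| ≤ C * K ^ (1 - s) + C * K' ^ (1 - s) := by
        have he : c1 - c2 = (∫ ω, (ξK K n ω - ξ n ω) ∂μ) - ∫ ω, (ξK K' n ω - ξ n ω) ∂μ := by
          rw [integral_sub (hintK K hK n) (hξ n), integral_sub (hintK K' hK' n) (hξ n)]
          ring
        rw [he]
        calc |(∫ ω, (ξK K n ω - ξ n ω) ∂μ) - ∫ ω, (ξK K' n ω - ξ n ω) ∂μ|
            ≤ |∫ ω, (ξK K n ω - ξ n ω) ∂μ| + |∫ ω, (ξK K' n ω - ξ n ω) ∂μ| := abs_sub _ _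
          _ ≤ (∫ ω, |ξK K n ω - ξ n ω| ∂μ) + ∫ ω, |ξK K' n ω - ξ n ω| ∂μ :=
              add_le_add (aux_abs_integral_le hint1) (aux_abs_integral_le hint2)
          _ ≤ C * K ^ (1 - s) + C * K' ^ (1 - s) :=
              add_le_add (H1b1 K hK n) (H1b1 K' hK' n)
      have hptwise : ∀ ω, |ξhatK K n ω - ξhatK K' n ω| ≤
          |ξK K n ω - ξ n ω| + |ξK K' n ω - ξ n ω| + |c1 - c2| := by
        intro ω
        rw [hξhatK, hξhatK, ← hc1, ← hc2]
        have : ξK K n ω - c1 - (ξK K' n ω - c2) =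
            (ξK K n ω - ξ n ω) - (ξK K' n ω - ξ n ω) - (c1 - c2) := by ring
        rw [this]
        calc |(ξK K n ω - ξ n ω) - (ξK K' n ω - ξ n ω) - (c1 - c2)|
            ≤ |(ξK K n ω - ξ n ω) - (ξK K' n ω - ξ n ω)| + |c1 - c2| := abs_sub _ _
          _ ≤ |ξK K n ω - ξ n ω| + |ξK K' n ω - ξ n ω| + |c1 - c2| := by
              have := abs_sub (ξK K n ω - ξ n ω) (ξK K' n ω - ξ n ω)
              linarith
      calc ∫ ω, |ξhatK K n ω - ξhatK K' n ω| ∂μ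
          ≤ ∫ ω, (|ξK K n ω - ξ n ω| + |ξK K' n ω - ξ n ω| + |c1 - c2|) ∂μ := by
            refine integral_mono_ae ((hint_hat K hK n).sub (hint_hat K' hK' n)).abs
              ((hint1.abs.add hint2.abs).add (integrable_const _))
              (Eventually.of_forall hptwise)
        _ = (∫ ω, |ξK K n ω - ξ n ω| ∂μ) + (∫ ω, |ξK K' n ω - ξ n ω| ∂μ) + |c1 - c2| := by
            have i12 : Integrable (fun ω => |ξK K n ω - ξ n ω| + |ξK K' n ω - ξ n ω|) μ :=
              hint1.abs.add hint2.abs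
            rw [integral_add i12 (integrable_const _), integral_add hint1.abs hint2.abs,
              integral_const]
            simp
        _ ≤ (C * K ^ (1 - s) + C * K' ^ (1 - s)) + |c1 - c2| := by
            have := add_le_add (H1b1 K hK n) (H1b1 K' hK' n)
            linarith
        _ ≤ 2 * (C * K ^ (1 - s) + C * K' ^ (1 - s)) := by linarith
    intro K K' hK hKK' h2K j n
    have hK' : 1 ≤ K' := hK.trans hKK'
    have hK0 : (0:ℝ) < K := lt_of_lt_of_le one_pos hK
    have hK'0 : (0:ℝ) < K' := lt_of_lt_of_le one_pos hK'
    -- the two cross terms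
    have hintXX' : Integrable (fun ω => ξhatK K n ω - ξhatK K' n ω) μ :=
      (hint_hat K hK n).sub (hint_hat K' hK' n)
    have hintYY' : Integrable (fun ω => ξhatK K (n + j) ω - ξhatK K' (n + j) ω) μ :=
      (hint_hat K hK (n + j)).sub (hint_hat K' hK' (n + j))
    have hintT1 : Integrable (fun ω => (ξhatK K n ω - ξhatK K' n ω) * ξhatK K (n + j) ω) μ := by
      have := Integrable.bdd_mul (c := 2 * K) hintXX'
        (hint_hat K hK (n + j)).aestronglyMeasurable
        (by simpa [Real.norm_eq_abs] using hbd_hat K hK (n + j))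
      refine this.congr (Eventually.of_forall fun ω => ?_)
      simp [mul_comm]
    have hintT2 : Integrable
        (fun ω => ξhatK K' n ω * (ξhatK K (n + j) ω - ξhatK K' (n + j) ω)) μ :=
      Integrable.bdd_mul (c := 2 * K') hintYY' (hint_hat K' hK' n).aestronglyMeasurable
        (by simpa [Real.norm_eq_abs] using hbd_hat K' hK' n)
    have hsplit : D n j K - D n j K' =
        (∫ ω, (ξhatK K n ω - ξhatK K' n ω) * ξhatK K (n + j) ω ∂μ)
        + ∫ ω, ξhatK K' n ω * (ξhatK K (n + j) ω - ξhatK K' (n + j) ω) ∂μ := by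
      rw [← integral_add hintT1 hintT2]
      simp only [hDdef]
      rw [← integral_sub (hint_prod K hK n (n + j)) (hint_prod K' hK' n (n + j))]
      refine integral_congr_ae (Eventually.of_forall fun ω => ?_)
      ring
    have hT1 : |∫ ω, (ξhatK K n ω - ξhatK K' n ω) * ξhatK K (n + j) ω ∂μ| ≤
        (2 * K) * (2 * (C * K ^ (1 - s) + C * K' ^ (1 - s))) := by
      refine (aux_abs_integral_mul_le hintXX' (hint_hat K hK (n + j)).aestronglyMeasurable
        (by positivity) (hbd_hat K hK (n + j))).trans ?_
      exact mul_le_mul_of_nonneg_left (hL1hat K K' hK hK' n) (by positivity)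
    have hT2 : |∫ ω, ξhatK K' n ω * (ξhatK K (n + j) ω - ξhatK K' (n + j) ω) ∂μ| ≤
        (2 * K') * (2 * (C * K ^ (1 - s) + C * K' ^ (1 - s))) := by
      have hcomm : (∫ ω, ξhatK K' n ω * (ξhatK K (n + j) ω - ξhatK K' (n + j) ω) ∂μ)
          = ∫ ω, (ξhatK K (n + j) ω - ξhatK K' (n + j) ω) * ξhatK K' n ω ∂μ := by
        refine integral_congr_ae (Eventually.of_forall fun ω => ?_)
        ring
      rw [hcomm]
      refine (aux_abs_integral_mul_le hintYY' (hint_hat K' hK' n).aestronglyMeasurable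
        (by positivity) (hbd_hat K' hK' n)).trans ?_
      exact mul_le_mul_of_nonneg_left (hL1hat K K' hK hK' (n + j)) (by positivity)
    -- numeric conclusion
    have hmono : K' ^ (1 - s) ≤ K ^ (1 - s) :=
      Real.rpow_le_rpow_of_nonpos hK0 hKK' (by linarith)
    have hKpow : K * K ^ (1 - s) = K ^ (2 - s) := by
      rw [show (2 - s) = 1 + (1 - s) by ring, Real.rpow_add hK0, Real.rpow_one]
    have hpos1 : (0:ℝ) ≤ K ^ (1 - s) := (Real.rpow_pos_of_pos hK0 _).le
    calc |D n j K - D n j K'| ≤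
        (2 * K) * (2 * (C * K ^ (1 - s) + C * K' ^ (1 - s)))
          + (2 * K') * (2 * (C * K ^ (1 - s) + C * K' ^ (1 - s))) := by
          rw [hsplit]
          exact (abs_add_le _ _).trans (add_le_add hT1 hT2)
      _ ≤ (2 * K) * (2 * (C * K ^ (1 - s) + C * K ^ (1 - s)))
          + (2 * (2 * K)) * (2 * (C * K ^ (1 - s) + C * K ^ (1 - s))) := by
          have hb : 2 * (C * K ^ (1 - s) + C * K' ^ (1 - s)) ≤
              2 * (C * K ^ (1 - s) + C * K ^ (1 - s)) := by
            have := mul_le_mul_of_nonneg_left hmono hC0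
            linarith
          have hbnn : (0:ℝ) ≤ 2 * (C * K ^ (1 - s) + C * K' ^ (1 - s)) := by
            have := (Real.rpow_pos_of_pos hK'0 (1 - s)).le
            positivity
          refine add_le_add (mul_le_mul_of_nonneg_left hb (by positivity)) ?_
          exact mul_le_mul (by linarith) hb hbnn (by positivity)
      _ = 24 * C * (K * K ^ (1 - s)) := by ring
      _ = 24 * C * K ^ (2 - s) := by rw [hKpow]
  -- Step 3: decay of correlations for `D`
  have h3 : ∀ K, 1 ≤ K → ∀ n j, |D n j K| ≤
      12 * (C + 1) * K ^ (2 + u) * ((n : ℝ) + (j : ℝ) + 1) ^ u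
        * (θ ^ (j / 2) + θ ^ (j - j / 2)) := by
    intro K hK n j
    have hK0 : (0:ℝ) < K := lt_of_lt_of_le one_pos hK
    set k := j / 2 with hkdef
    have hkj : k ≤ j := Nat.div_le_self j 2
    set c0 : ℝ := ∫ ω', ξK K n ω' ∂μ with hc0
    set η : Ω → ℝ := fun ω => ξapp K n k ω - c0 with hη
    have hηmeas : StronglyMeasurable[F (n + k)] η :=
      ((H2meas K n k hK).sub measurable_const).stronglyMeasurable
    have hηaesm : AEStronglyMeasurable η μ :=
      (hηmeas.mono (hFle (n + k))).aestronglyMeasurable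
    have hηbd : ∀ᵐ ω ∂μ, |η ω| ≤ 2 * K := by
      filter_upwards [H2bdd K n k hK] with ω hω
      calc |ξapp K n k ω - c0| ≤ |ξapp K n k ω| + |c0| := abs_sub _ _
        _ ≤ K + K := add_le_add hω (habs_int K hK n)
        _ = 2 * K := by ring
    have hηint : Integrable η μ := aux_integrable_of_bound hηaesm hηbd
    have hdiff : ∀ ω, ξhatK K n ω - η ω = ξK K n ω - ξapp K n k ω := by
      intro ω
      rw [hξhatK, hη]
      simp only [← hc0]
      ring
    have happint : Integrable (ξapp K n k) μ :=
      aux_integrable_of_bound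
        (((H2meas K n k hK).mono (hFle _) le_rfl).aestronglyMeasurable) (H2bdd K n k hK)
    have hdiffint : Integrable (fun ω => ξK K n ω - ξapp K n k ω) μ :=
      (hintK K hK n).sub happint
    have hdiffbd : ∀ᵐ ω ∂μ, |ξK K n ω - ξapp K n k ω| ≤ 2 * K := by
      filter_upwards [H1a K hK n, H2bdd K n k hK] with ω h1' h2'
      calc |ξK K n ω - ξapp K n k ω| ≤ |ξK K n ω| + |ξapp K n k ω| := abs_sub _ _
        _ ≤ K + K := add_le_add h1' h2'
        _ = 2 * K := by ring
    have hL1 : ∫ ω, |ξK K n ω - ξapp K n k ω| ∂μ ≤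
        θ ^ k + (2 * K) * (C * K ^ u * ((n : ℝ) + 1) ^ u * θ ^ k) :=
      aux_L1_of_prob hdiffint (by positivity) (by positivity) (by positivity) hdiffbd
        (H2prob K n k hK)
    have hY := hint_hat K hK (n + j)
    -- term 1
    have hXmη_int : Integrable (fun ω => ξhatK K n ω - η ω) μ := (hint_hat K hK n).sub hηint
    have hT1 : |∫ ω, (ξhatK K n ω - η ω) * ξhatK K (n + j) ω ∂μ| ≤
        (2 * K) * (θ ^ k + (2 * K) * (C * K ^ u * ((n : ℝ) + 1) ^ u * θ ^ k)) := by
      refine (aux_abs_integral_mul_le hXmη_int hY.aestronglyMeasurable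
        (by positivity) (hbd_hat K hK (n + j))).trans ?_
      refine mul_le_mul_of_nonneg_left ?_ (by positivity)
      calc ∫ ω, |ξhatK K n ω - η ω| ∂μ = ∫ ω, |ξK K n ω - ξapp K n k ω| ∂μ := by
            refine integral_congr_ae (Eventually.of_forall fun ω => ?_)
            exact congrArg abs (hdiff ω)
        _ ≤ _ := hL1
    -- term 2 : pull-out the measurable factor
    have hηY_int : Integrable (η * ξhatK K (n + j)) μ :=
      Integrable.bdd_mul (c := 2 * K) hY hηaesm (by simpa [Real.norm_eq_abs] using hηbd)
    have hpull : μ[η * ξhatK K (n + j)|F (n + k)] =ᵐ[μ] η * μ[ξhatK K (n + j)|F (n + k)] :=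
      condExp_mul_of_stronglyMeasurable_left hηmeas hηY_int hY
    have hint_pull : ∫ ω, η ω * ξhatK K (n + j) ω ∂μ
        = ∫ ω, η ω * (μ[ξhatK K (n + j)|F (n + k)]) ω ∂μ := by
      calc ∫ ω, η ω * ξhatK K (n + j) ω ∂μ
          = ∫ ω, (μ[η * ξhatK K (n + j)|F (n + k)]) ω ∂μ :=
            (integral_condExp (hFle (n + k))).symm
        _ = ∫ ω, (η * μ[ξhatK K (n + j)|F (n + k)]) ω ∂μ := integral_congr_ae hpull
        _ = ∫ ω, η ω * (μ[ξhatK K (n + j)|F (n + k)]) ω ∂μ := rfl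
    have hcondYbd : ∀ᵐ ω ∂μ, |(μ[ξhatK K (n + j)|F (n + k)]) ω| ≤ 2 * K :=
      aux_condexp_abs_le (hFle (n + k)) hY (hbd_hat K hK (n + j))
    have hH3 := H3 K (n + k) (j - k) hK
    have hidx : n + k + (j - k) = n + j := by omega
    rw [hidx] at hH3
    have hηcond_int : Integrable (η * μ[ξhatK K (n + j)|F (n + k)]) μ :=
      Integrable.bdd_mul (c := 2 * K) integrable_condExp hηaesm
        (by simpa [Real.norm_eq_abs] using hηbd)
    have hT2 : |∫ ω, η ω * (μ[ξhatK K (n + j)|F (n + k)]) ω ∂μ| ≤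
        (2 * K) * (C * (((n + k : ℕ) : ℝ) + 1) ^ u * K ^ u * θ ^ (j - k))
          + (4 * K ^ 2) * (C * θ ^ (j - k)) := by
      have hsp := aux_split_bound (μ := μ) (hGmeas (n + k) (j - k)) hηcond_int
        (a := (2 * K) * (C * (((n + k : ℕ) : ℝ) + 1) ^ u * K ^ u * θ ^ (j - k)))
        (c := 4 * K ^ 2) (by positivity) (by positivity)
        (by
          filter_upwards [hηbd, hH3] with ω hb hg hmem
          rw [Pi.mul_apply, abs_mul]
          calc |η ω| * |(μ[ξhatK K (n + j)|F (n + k)]) ω|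
              ≤ (2 * K) * (C * (((n + k : ℕ) : ℝ) + 1) ^ u * K ^ u * θ ^ (j - k)) :=
                mul_le_mul hb (hg hmem) (abs_nonneg _) (by positivity))
        (by
          filter_upwards [hηbd, hcondYbd] with ω hb hc'
          rw [Pi.mul_apply, abs_mul]
          calc |η ω| * |(μ[ξhatK K (n + j)|F (n + k)]) ω| ≤ (2 * K) * (2 * K) :=
                mul_le_mul hb hc' (abs_nonneg _) (by positivity)
            _ = 4 * K ^ 2 := by ring)
      calc |∫ ω, η ω * (μ[ξhatK K (n + j)|F (n + k)]) ω ∂μ|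
          = |∫ ω, (η * μ[ξhatK K (n + j)|F (n + k)]) ω ∂μ| := rfl
        _ ≤ (2 * K) * (C * (((n + k : ℕ) : ℝ) + 1) ^ u * K ^ u * θ ^ (j - k))
            + (4 * K ^ 2) * (μ (G (n + k) (j - k))ᶜ).toReal := hsp
        _ ≤ _ := by
            refine add_le_add_right (mul_le_mul_of_nonneg_left (hGc _ _) (by positivity)) _
    -- split `D`
    have hintT1' : Integrable (fun ω => (ξhatK K n ω - η ω) * ξhatK K (n + j) ω) μ := by
      have := Integrable.bdd_mul (c := 2 * K) hXmη_int hY.aestronglyMeasurable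
        (by simpa [Real.norm_eq_abs] using hbd_hat K hK (n + j))
      refine this.congr (Eventually.of_forall fun ω => ?_)
      simp [mul_comm]
    have hintT2' : Integrable (fun ω => η ω * ξhatK K (n + j) ω) μ := hηY_int
    have hDsplit : D n j K = (∫ ω, (ξhatK K n ω - η ω) * ξhatK K (n + j) ω ∂μ)
        + ∫ ω, η ω * ξhatK K (n + j) ω ∂μ := by
      rw [← integral_add hintT1' hintT2']
      simp only [hDdef]
      refine integral_congr_ae (Eventually.of_forall fun ω => ?_)
      ring
    have hDraw : |D n j K| ≤
        (2 * K) * (θ ^ k + (2 * K) * (C * K ^ u * ((n : ℝ) + 1) ^ u * θ ^ k))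
        + ((2 * K) * (C * (((n + k : ℕ) : ℝ) + 1) ^ u * K ^ u * θ ^ (j - k))
          + (4 * K ^ 2) * (C * θ ^ (j - k))) := by
      rw [hDsplit, hint_pull]
      exact (abs_add_le _ _).trans (add_le_add hT1 hT2)
    -- clean up the bound
    set P : ℝ := ((n : ℝ) + (j : ℝ) + 1) ^ u with hP
    have hP0 : (0:ℝ) ≤ P := Real.rpow_nonneg (by positivity) u
    have hP1 : (1:ℝ) ≤ P := by
      rw [hP]
      refine Real.one_le_rpow ?_ hu.le
      have h1' : (0:ℝ) ≤ (n:ℝ) := Nat.cast_nonneg n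
      have h2' : (0:ℝ) ≤ (j:ℝ) := Nat.cast_nonneg j
      linarith
    have hθk0 : (0:ℝ) ≤ θ ^ k := by positivity
    have hθjk0 : (0:ℝ) ≤ θ ^ (j - k) := by positivity
    have hKu0 : (0:ℝ) < K ^ u := Real.rpow_pos_of_pos hK0 u
    have hQ : (0:ℝ) ≤ K ^ (2 + u) * P := by positivity
    have hb1 : K ≤ K ^ (2 + u) := by
      have : K ^ (1:ℝ) ≤ K ^ (2 + u) := Real.rpow_le_rpow_of_exponent_le hK (by linarith)
      rwa [Real.rpow_one] at this
    have hb2 : K ^ 2 * K ^ u = K ^ (2 + u) := by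
      rw [← Real.rpow_natCast K 2, ← Real.rpow_add hK0]
      norm_num
    have hb3 : K * K ^ u ≤ K ^ (2 + u) := by
      have e : K * K ^ u = K ^ (1 + u) := by
        rw [Real.rpow_add hK0, Real.rpow_one]
      rw [e]
      exact Real.rpow_le_rpow_of_exponent_le hK (by linarith)
    have hb4 : K ^ 2 ≤ K ^ (2 + u) := by
      rw [← Real.rpow_natCast K 2]
      exact Real.rpow_le_rpow_of_exponent_le hK (by push_cast; linarith)
    have hPn : ((n : ℝ) + 1) ^ u ≤ P := by
      rw [hP]
      refine Real.rpow_le_rpow (by positivity) ?_ hu.le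
      have : (0:ℝ) ≤ (j:ℝ) := Nat.cast_nonneg j
      linarith
    have hPnk : (((n + k : ℕ) : ℝ) + 1) ^ u ≤ P := by
      rw [hP]
      refine Real.rpow_le_rpow (by positivity) ?_ hu.le
      push_cast
      have : (k:ℝ) ≤ (j:ℝ) := Nat.cast_le.2 hkj
      linarith
    have ht1 : (2 * K) * θ ^ k ≤ 2 * (K ^ (2 + u) * P) * θ ^ k := by
      refine mul_le_mul_of_nonneg_right ?_ hθk0
      have : K ≤ K ^ (2 + u) * P := hb1.trans (le_mul_of_one_le_right (by positivity) hP1)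
      linarith
    have ht2 : (2 * K) * ((2 * K) * (C * K ^ u * ((n : ℝ) + 1) ^ u * θ ^ k)) ≤
        4 * C * (K ^ (2 + u) * P) * θ ^ k := by
      have e : (2 * K) * ((2 * K) * (C * K ^ u * ((n : ℝ) + 1) ^ u * θ ^ k)) =
          4 * C * ((K ^ 2 * K ^ u) * ((n : ℝ) + 1) ^ u) * θ ^ k := by ring
      rw [e, hb2]
      refine mul_le_mul_of_nonneg_right ?_ hθk0
      refine mul_le_mul_of_nonneg_left ?_ (by positivity)
      exact mul_le_mul_of_nonneg_left hPn (by positivity)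
    have ht3 : (2 * K) * (C * (((n + k : ℕ) : ℝ) + 1) ^ u * K ^ u * θ ^ (j - k)) ≤
        2 * C * (K ^ (2 + u) * P) * θ ^ (j - k) := by
      have e : (2 * K) * (C * (((n + k : ℕ) : ℝ) + 1) ^ u * K ^ u * θ ^ (j - k)) =
          2 * C * ((K * K ^ u) * (((n + k : ℕ) : ℝ) + 1) ^ u) * θ ^ (j - k) := by ring
      rw [e]
      refine mul_le_mul_of_nonneg_right ?_ hθjk0
      refine mul_le_mul_of_nonneg_left ?_ (by positivity)
      exact mul_le_mul hb3 hPnk (by positivity) (by positivity)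
    have ht4 : (4 * K ^ 2) * (C * θ ^ (j - k)) ≤ 4 * C * (K ^ (2 + u) * P) * θ ^ (j - k) := by
      have e : (4 * K ^ 2) * (C * θ ^ (j - k)) = 4 * C * (K ^ 2) * θ ^ (j - k) := by ring
      rw [e]
      refine mul_le_mul_of_nonneg_right ?_ hθjk0
      refine mul_le_mul_of_nonneg_left ?_ (by positivity)
      exact hb4.trans (le_mul_of_one_le_right (by positivity) hP1)
    have ha0 : (0:ℝ) ≤ K ^ (2 + u) * P * θ ^ k := by positivity
    have hb0 : (0:ℝ) ≤ K ^ (2 + u) * P * θ ^ (j - k) := by positivity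
    have hca : (0:ℝ) ≤ C * (K ^ (2 + u) * P * θ ^ k) := mul_nonneg hC0 ha0
    have hcb : (0:ℝ) ≤ C * (K ^ (2 + u) * P * θ ^ (j - k)) := mul_nonneg hC0 hb0
    refine hDraw.trans ?_
    calc (2 * K) * (θ ^ k + (2 * K) * (C * K ^ u * ((n : ℝ) + 1) ^ u * θ ^ k))
        + ((2 * K) * (C * (((n + k : ℕ) : ℝ) + 1) ^ u * K ^ u * θ ^ (j - k))
          + (4 * K ^ 2) * (C * θ ^ (j - k)))
        = (2 * K) * θ ^ k + (2 * K) * ((2 * K) * (C * K ^ u * ((n : ℝ) + 1) ^ u * θ ^ k))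
          + ((2 * K) * (C * (((n + k : ℕ) : ℝ) + 1) ^ u * K ^ u * θ ^ (j - k))
            + (4 * K ^ 2) * (C * θ ^ (j - k))) := by ring
      _ ≤ 2 * (K ^ (2 + u) * P) * θ ^ k + 4 * C * (K ^ (2 + u) * P) * θ ^ k
          + (2 * C * (K ^ (2 + u) * P) * θ ^ (j - k)
            + 4 * C * (K ^ (2 + u) * P) * θ ^ (j - k)) :=
          add_le_add (add_le_add ht1 ht2) (add_le_add ht3 ht4)
      _ ≤ 12 * (C + 1) * K ^ (2 + u) * P * (θ ^ k + θ ^ (j - k)) := by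
          nlinarith [ha0, hb0, hca, hcb]
  -- Step 4: `b K j` is the limit of `D n j K` in `n`
  have hlim : ∀ K, 1 ≤ K → ∀ j, Tendsto (fun n => D n j K) atTop (𝓝 (b K j)) := by
    intro K hK j
    rw [tendsto_iff_dist_tendsto_zero]
    have hb := (tendsto_pow_atTop_nhds_zero_of_lt_one hθ0.le hθ1).const_mul
      (C * K ^ u * Real.exp (u * j) + (4 * K ^ 2 + |b K j|) * C)
    rw [mul_zero] at hb
    refine squeeze_zero' (Eventually.of_forall fun n => dist_nonneg) ?_ hb
    filter_upwards with n
    rw [Real.dist_eq]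
    exact h1 K hK j n
  -- Step 5: comparison of `b` for different truncation levels
  have hbb : ∀ (j : ℕ) K K', 1 ≤ K → K ≤ K' → K' ≤ 2 * K →
      |b K j - b K' j| ≤ 24 * C * K ^ (2 - s) := by
    intro j K K' hK hKK' h2K
    have hK' : 1 ≤ K' := hK.trans hKK'
    have ht : Tendsto (fun n => |D n j K - D n j K'|) atTop (𝓝 |b K j - b K' j|) :=
      ((hlim K hK j).sub (hlim K' hK' j)).abs
    exact le_of_tendsto ht (Eventually.of_forall fun n => h2 K K' hK hKK' h2K j n)
  -- Step 6: geometric Cauchy sequence along powers of 2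
  set r : ℝ := (2:ℝ) ^ (2 - s) with hrdef
  have hr0 : (0:ℝ) < r := Real.rpow_pos_of_pos two_pos _
  have hr1 : r < 1 := Real.rpow_lt_one_of_one_lt_of_neg one_lt_two (by linarith)
  have h1r : (0:ℝ) < 1 - r := by linarith
  have hpow1 : ∀ m : ℕ, (1:ℝ) ≤ 2 ^ m := fun m => one_le_pow₀ (by norm_num)
  have hconv : ∀ m : ℕ, ((2:ℝ) ^ m) ^ (2 - s) = r ^ m := by
    intro m
    rw [hrdef, ← Real.rpow_natCast ((2:ℝ) ^ (2 - s)) m, ← Real.rpow_natCast (2:ℝ) m,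
      ← Real.rpow_mul (by norm_num : (0:ℝ) ≤ 2), ← Real.rpow_mul (by norm_num : (0:ℝ) ≤ 2),
      mul_comm]
  have hgeo : ∀ j m : ℕ, dist (b ((2:ℝ) ^ m) j) (b ((2:ℝ) ^ (m + 1)) j) ≤ (24 * C) * r ^ m := by
    intro j m
    rw [Real.dist_eq]
    have hle : (2:ℝ) ^ m ≤ 2 ^ (m + 1) := by
      rw [pow_succ]
      nlinarith [hpow1 m]
    have hle2 : (2:ℝ) ^ (m + 1) ≤ 2 * 2 ^ m := by
      rw [pow_succ]
      ring_nf
      exact le_refl _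
    calc |b ((2:ℝ) ^ m) j - b ((2:ℝ) ^ (m + 1)) j| ≤ 24 * C * ((2:ℝ) ^ m) ^ (2 - s) :=
        hbb j ((2:ℝ) ^ m) ((2:ℝ) ^ (m + 1)) (hpow1 m) hle hle2
      _ = 24 * C * r ^ m := by rw [hconv]
  have hex : ∀ j : ℕ, ∃ L : ℝ, Tendsto (fun m : ℕ => b ((2:ℝ) ^ m) j) atTop (𝓝 L) := fun j =>
    cauchySeq_tendsto_of_complete (cauchySeq_of_le_geometric r (24 * C) hr1 (hgeo j))
  choose σs hσs using hex
  have hσdist : ∀ j m, dist (b ((2:ℝ) ^ m) j) (σs j) ≤ 24 * C * r ^ m / (1 - r) :=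
    fun j m => dist_le_of_le_geometric_of_tendsto r (24 * C) hr1 (hgeo j) (hσs j) m
  set C₁ : ℝ := 24 * C + 24 * C / (1 - r) with hC₁
  have hC₁0 : 0 < C₁ := by positivity
  -- Step 7: rate of approximation of `σs` by `b K`
  have hKσ : ∀ (j : ℕ) (K : ℝ), 1 ≤ K → |b K j - σs j| ≤ C₁ * K ^ (2 - s) := by
    intro j K hK
    have hK0 : (0:ℝ) < K := lt_of_lt_of_le one_pos hK
    set m := ⌊Real.logb 2 K⌋₊ with hm
    have hlogb0 : 0 ≤ Real.logb 2 K := Real.logb_nonneg one_lt_two hK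
    have hmle : (2:ℝ) ^ m ≤ K := by
      rw [← Real.rpow_natCast]
      calc (2:ℝ) ^ (m:ℝ) ≤ 2 ^ Real.logb 2 K :=
          Real.rpow_le_rpow_of_exponent_le one_le_two (Nat.floor_le hlogb0)
        _ = K := Real.rpow_logb two_pos (by norm_num) hK0
    have hmge : K ≤ (2:ℝ) ^ (m + 1) := by
      rw [← Real.rpow_natCast]
      calc K = 2 ^ Real.logb 2 K := (Real.rpow_logb two_pos (by norm_num) hK0).symm
        _ ≤ 2 ^ ((m + 1 : ℕ) : ℝ) := by
            refine Real.rpow_le_rpow_of_exponent_le one_le_two ?_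
            push_cast
            exact (Nat.lt_floor_add_one _).le
    have h2K : (2:ℝ) ^ (m + 1) ≤ 2 * K := by
      rw [pow_succ]
      nlinarith [hmle]
    have hfirst : |b K j - b ((2:ℝ) ^ (m + 1)) j| ≤ 24 * C * K ^ (2 - s) :=
      hbb j K _ hK hmge h2K
    have hKs0 : (0:ℝ) ≤ K ^ (2 - s) := (Real.rpow_pos_of_pos hK0 _).le
    have hsecond : |b ((2:ℝ) ^ (m + 1)) j - σs j| ≤ 24 * C / (1 - r) * K ^ (2 - s) := by
      have hd := hσdist j (m + 1)
      rw [Real.dist_eq] at hd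
      have hrm : r ^ (m + 1) ≤ K ^ (2 - s) := by
        rw [← hconv (m + 1)]
        exact Real.rpow_le_rpow_of_nonpos hK0 hmge (by linarith)
      have hnum : 24 * C * r ^ (m + 1) ≤ 24 * C * K ^ (2 - s) :=
        mul_le_mul_of_nonneg_left hrm (by positivity)
      calc |b ((2:ℝ) ^ (m + 1)) j - σs j| ≤ 24 * C * r ^ (m + 1) / (1 - r) := hd
        _ ≤ 24 * C * K ^ (2 - s) / (1 - r) := by
            exact div_le_div_of_nonneg_right hnum h1r.le
        _ = 24 * C / (1 - r) * K ^ (2 - s) := by ring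
    calc |b K j - σs j| ≤ |b K j - b ((2:ℝ) ^ (m + 1)) j| + |b ((2:ℝ) ^ (m + 1)) j - σs j| :=
        abs_sub_le _ _ _
      _ ≤ 24 * C * K ^ (2 - s) + 24 * C / (1 - r) * K ^ (2 - s) := add_le_add hfirst hsecond
      _ = C₁ * K ^ (2 - s) := by rw [hC₁]; ring
  -- Step 8: convergence of `b K j` as `K → ∞`
  have htendK : ∀ j, Tendsto (fun K : ℝ => b K j) atTop (𝓝 (σs j)) := by
    intro j
    rw [tendsto_iff_dist_tendsto_zero]
    have hz : Tendsto (fun K : ℝ => C₁ * K ^ (2 - s)) atTop (𝓝 0) := by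
      have h' := (tendsto_rpow_neg_atTop (by linarith : (0:ℝ) < s - 2)).const_mul C₁
      rw [mul_zero] at h'
      refine h'.congr fun K => ?_
      rw [show -(s - 2) = 2 - s by ring]
    refine squeeze_zero' (Eventually.of_forall fun K => dist_nonneg) ?_ hz
    filter_upwards [eventually_ge_atTop (1:ℝ)] with K hK
    rw [Real.dist_eq]
    exact hKσ j K hK
  -- Step 9: geometric decay of `σs`
  set β : ℝ := 1 / (4 * (u + 2)) with hβ
  have hβ0 : 0 < β := by positivity
  have hβu : β * (2 + u) = 1 / 4 := by
    rw [hβ]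
    field_simp
    ring
  obtain ⟨n₀, hn₀⟩ : ∃ n₀ : ℕ, θ ^ n₀ < 1 / (2 * (C + 1)) :=
    exists_pow_lt_of_lt_one (by positivity) hθ1
  have hn₀' : C * θ ^ n₀ ≤ 1 / 2 := by
    have h1' : C * θ ^ n₀ ≤ C * (1 / (2 * (C + 1))) := mul_le_mul_of_nonneg_left hn₀.le hC0
    have h2' : C * (1 / (2 * (C + 1))) ≤ 1 / 2 := by
      rw [mul_one_div, div_le_div_iff₀ (by positivity) (by norm_num)]
      linarith
    linarith
  obtain ⟨M, hM⟩ := exists_pow_lt_of_lt_one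
    (show (0:ℝ) < min (θ ^ (β * u) * Real.exp (-u)) (θ ^ (β * 2)) * θ by positivity) hθ1
  set q1 : ℝ := θ ^ (-(β * u)) * Real.exp u * θ ^ M with hq1def
  set q2 : ℝ := θ ^ (-(β * 2)) * θ ^ M with hq2def
  have hq10 : (0:ℝ) ≤ q1 := by positivity
  have hq20 : (0:ℝ) ≤ q2 := by positivity
  have hq1θ : q1 ≤ θ := by
    have h' : θ ^ M ≤ θ ^ (β * u) * Real.exp (-u) * θ :=
      (lt_of_lt_of_le hM (mul_le_mul_of_nonneg_right (min_le_left _ _) hθ0.le)).le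
    rw [hq1def]
    calc θ ^ (-(β * u)) * Real.exp u * θ ^ M
        ≤ θ ^ (-(β * u)) * Real.exp u * (θ ^ (β * u) * Real.exp (-u) * θ) :=
          mul_le_mul_of_nonneg_left h' (by positivity)
      _ = (θ ^ (-(β * u)) * θ ^ (β * u)) * (Real.exp u * Real.exp (-u)) * θ := by ring
      _ = θ := by
          rw [← Real.rpow_add hθ0, ← Real.exp_add]
          simp
  have hq2θ : q2 ≤ θ := by
    have h' : θ ^ M ≤ θ ^ (β * 2) * θ :=
      (lt_of_lt_of_le hM (mul_le_mul_of_nonneg_right (min_le_right _ _) hθ0.le)).le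
    rw [hq2def]
    calc θ ^ (-(β * 2)) * θ ^ M ≤ θ ^ (-(β * 2)) * (θ ^ (β * 2) * θ) :=
          mul_le_mul_of_nonneg_left h' (by positivity)
      _ = (θ ^ (-(β * 2)) * θ ^ (β * 2)) * θ := by ring
      _ = θ := by
          rw [← Real.rpow_add hθ0]
          simp
  set ν : ℝ := θ ^ (β * (s - 2)) with hνdef
  have hν0 : (0:ℝ) ≤ ν := by positivity
  have hν1 : ν < 1 := Real.rpow_lt_one hθ0.le hθ1 (mul_pos hβ0 (by linarith))
  set ρ8 : ℝ := θ ^ ((1:ℝ) / 8) with hρ8def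
  have hρ80 : (0:ℝ) < ρ8 := Real.rpow_pos_of_pos hθ0 _
  have hρ81 : ρ8 < 1 := Real.rpow_lt_one hθ0.le hθ1 (by norm_num)
  obtain ⟨cp, hcp0, hcp⟩ := aux_polygeom (q := ρ8) hρ80 hρ81
    (A := (n₀:ℝ) + 1) (B := (M:ℝ) + 1)
    (by have := Nat.cast_nonneg (α := ℝ) n₀; linarith)
    (by have := Nat.cast_nonneg (α := ℝ) M; linarith) hu.le
  -- the identity for powers of `K_j = θ ^ (-(β j))`
  have hpowid : ∀ (j : ℕ) (x : ℝ), (θ ^ (-(β * (j:ℝ)))) ^ x = (θ ^ (-(β * x))) ^ j := by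
    intro j x
    rw [← Real.rpow_natCast (θ ^ (-(β * x))) j, ← Real.rpow_mul hθ0.le, ← Real.rpow_mul hθ0.le]
    congr 1
    ring
  have hKj1 : ∀ j : ℕ, (1:ℝ) ≤ θ ^ (-(β * (j:ℝ))) := fun j =>
    Real.one_le_rpow_of_pos_of_le_one_of_nonpos hθ0 hθ1.le
      (neg_nonpos.2 (by positivity))
  -- decay estimate for `σs`
  have hσ_decay : ∀ j : ℕ, |σs j| ≤
      C₁ * ν ^ j + 2 * (24 * (C + 1) * θ ^ (-(1:ℝ)/2) * cp * ρ8 ^ j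
        + C * θ ^ n₀ * q1 ^ j + 4 * C * θ ^ n₀ * q2 ^ j) := by
    intro j
    set Kj : ℝ := θ ^ (-(β * (j:ℝ))) with hKjdef
    have hKj : (1:ℝ) ≤ Kj := hKj1 j
    have hKj0 : (0:ℝ) < Kj := lt_of_lt_of_le one_pos hKj
    set nj : ℕ := n₀ + M * j with hnj
    -- a priori bound on `b Kj j`
    have hbD := h1 Kj hKj j nj
    have hDb := h3 Kj hKj nj j
    have hθnj : C * θ ^ nj ≤ 1 / 2 := by
      have : θ ^ nj ≤ θ ^ n₀ :=
        pow_le_pow_of_le_one hθ0.le hθ1.le (by omega)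
      nlinarith [hn₀']
    have hb_bound : |b Kj j| ≤ 2 * (|D nj j Kj|
        + C * Kj ^ u * Real.exp (u * j) * θ ^ nj + 4 * C * Kj ^ 2 * θ ^ nj) := by
      have habs : |b Kj j| ≤ |D nj j Kj| + |D nj j Kj - b Kj j| := by
        have := abs_sub_abs_le_abs_sub (D nj j Kj) (b Kj j)
        have h' := abs_sub_le (b Kj j) (D nj j Kj) 0
        simp only [sub_zero] at h'
        calc |b Kj j| ≤ |b Kj j - D nj j Kj| + |D nj j Kj| := h'
          _ = |D nj j Kj| + |D nj j Kj - b Kj j| := by rw [abs_sub_comm]; ring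
      have hexp : (C * Kj ^ u * Real.exp (u * j) + (4 * Kj ^ 2 + |b Kj j|) * C) * θ ^ nj
          = C * Kj ^ u * Real.exp (u * j) * θ ^ nj + 4 * C * Kj ^ 2 * θ ^ nj
            + |b Kj j| * (C * θ ^ nj) := by ring
      have hbC : |b Kj j| * (C * θ ^ nj) ≤ |b Kj j| * (1 / 2) :=
        mul_le_mul_of_nonneg_left hθnj (abs_nonneg _)
      rw [hexp] at hbD
      linarith [habs, hbD, hbC, abs_nonneg (b Kj j)]
    -- geometric bounds for the three pieces
    have hθnjsplit : θ ^ nj = θ ^ n₀ * (θ ^ M) ^ j := by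
      rw [hnj, pow_add, pow_mul]
    have hT1 : C * Kj ^ u * Real.exp (u * j) * θ ^ nj = C * θ ^ n₀ * q1 ^ j := by
      rw [hθnjsplit, hKjdef, hpowid j u, hq1def, mul_comm u (j:ℝ), Real.exp_nat_mul,
        mul_pow, mul_pow]
      ring
    have hT2 : 4 * C * Kj ^ 2 * θ ^ nj = 4 * C * θ ^ n₀ * q2 ^ j := by
      have hK2 : Kj ^ 2 = (θ ^ (-(β * 2))) ^ j := by
        rw [hKjdef, ← Real.rpow_natCast Kj 2, hpowid j ((2:ℕ):ℝ)]
        norm_num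
      rw [hθnjsplit, hK2, hq2def, mul_pow]
      ring
    -- bound for `|D nj j Kj|` : decay of correlations
    have hhalf1 : θ ^ (j / 2) ≤ θ ^ (-(1:ℝ)/2) * (θ ^ ((1:ℝ)/2)) ^ j := by
      have hcast : ((j:ℝ) - 1) / 2 ≤ ((j / 2 : ℕ) : ℝ) := by
        have hj2 : (j:ℝ) ≤ 2 * ((j / 2 : ℕ) : ℝ) + 1 := by
          have : j ≤ 2 * (j / 2) + 1 := by omega
          exact_mod_cast this
        linarith
      calc θ ^ (j / 2) ≤ θ ^ (((j:ℝ) - 1) / 2) := aux_pow_le_rpow hθ0 hθ1.le hcast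
        _ = θ ^ (-(1:ℝ)/2) * (θ ^ ((1:ℝ)/2)) ^ j := by
            rw [← Real.rpow_natCast (θ ^ ((1:ℝ)/2)) j, ← Real.rpow_mul hθ0.le,
              ← Real.rpow_add hθ0]
            congr 1
            ring
    have hhalf2 : θ ^ (j - j / 2) ≤ θ ^ (-(1:ℝ)/2) * (θ ^ ((1:ℝ)/2)) ^ j := by
      have hcast : ((j:ℝ) - 1) / 2 ≤ ((j - j / 2 : ℕ) : ℝ) := by
        have hj2 : (j:ℝ) ≤ 2 * ((j - j / 2 : ℕ) : ℝ) + 1 := by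
          have : j ≤ 2 * (j - j / 2) + 1 := by omega
          exact_mod_cast this
        linarith
      calc θ ^ (j - j / 2) ≤ θ ^ (((j:ℝ) - 1) / 2) := aux_pow_le_rpow hθ0 hθ1.le hcast
        _ = θ ^ (-(1:ℝ)/2) * (θ ^ ((1:ℝ)/2)) ^ j := by
            rw [← Real.rpow_natCast (θ ^ ((1:ℝ)/2)) j, ← Real.rpow_mul hθ0.le,
              ← Real.rpow_add hθ0]
            congr 1
            ring
    have hK2u : Kj ^ (2 + u) = (θ ^ (-(1:ℝ)/4)) ^ j := by
      rw [hKjdef, hpowid j (2 + u)]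
      congr 2
      rw [hβu]
      ring
    have hPj : ((nj:ℝ) + (j:ℝ) + 1) ^ u = (((n₀:ℝ) + 1) + ((M:ℝ) + 1) * j) ^ u := by
      congr 1
      rw [hnj]
      push_cast
      ring
    have hD3 : |D nj j Kj| ≤ 24 * (C + 1) * θ ^ (-(1:ℝ)/2) * cp * ρ8 ^ j := by
      refine hDb.trans ?_
      have hsum : θ ^ (j / 2) + θ ^ (j - j / 2) ≤
          2 * (θ ^ (-(1:ℝ)/2) * (θ ^ ((1:ℝ)/2)) ^ j) := by
        linarith [hhalf1, hhalf2]
      have hstep : 12 * (C + 1) * Kj ^ (2 + u) * ((nj:ℝ) + (j:ℝ) + 1) ^ u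
            * (θ ^ (j / 2) + θ ^ (j - j / 2))
          ≤ 12 * (C + 1) * Kj ^ (2 + u) * ((nj:ℝ) + (j:ℝ) + 1) ^ u
            * (2 * (θ ^ (-(1:ℝ)/2) * (θ ^ ((1:ℝ)/2)) ^ j)) :=
        mul_le_mul_of_nonneg_left hsum (by positivity)
      refine hstep.trans ?_
      rw [hK2u, hPj]
      have hquarter : (θ ^ (-(1:ℝ)/4)) ^ j * (θ ^ ((1:ℝ)/2)) ^ j = (θ ^ ((1:ℝ)/4)) ^ j := by
        rw [← mul_pow, ← Real.rpow_add hθ0]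
        norm_num
      have heighth : (θ ^ ((1:ℝ)/4)) ^ j = ρ8 ^ j * ρ8 ^ j := by
        rw [hρ8def, ← mul_pow, ← Real.rpow_add hθ0]
        norm_num
      have hpg := hcp j
      calc 12 * (C + 1) * (θ ^ (-(1:ℝ)/4)) ^ j * (((n₀:ℝ) + 1) + ((M:ℝ) + 1) * j) ^ u
            * (2 * (θ ^ (-(1:ℝ)/2) * (θ ^ ((1:ℝ)/2)) ^ j))
          = 24 * (C + 1) * θ ^ (-(1:ℝ)/2)
            * ((((n₀:ℝ) + 1) + ((M:ℝ) + 1) * j) ^ u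
              * ((θ ^ (-(1:ℝ)/4)) ^ j * (θ ^ ((1:ℝ)/2)) ^ j)) := by ring
        _ = 24 * (C + 1) * θ ^ (-(1:ℝ)/2)
            * ((((n₀:ℝ) + 1) + ((M:ℝ) + 1) * j) ^ u * ρ8 ^ j * ρ8 ^ j) := by
            rw [hquarter, heighth]
            ring
        _ ≤ 24 * (C + 1) * θ ^ (-(1:ℝ)/2) * (cp * ρ8 ^ j) := by
            refine mul_le_mul_of_nonneg_left ?_ (by positivity)
            exact mul_le_mul_of_nonneg_right hpg (by positivity)
        _ = 24 * (C + 1) * θ ^ (-(1:ℝ)/2) * cp * ρ8 ^ j := by ring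
    have hK2s : Kj ^ (2 - s) = ν ^ j := by
      rw [hKjdef, hpowid j (2 - s), hνdef]
      congr 2
      ring
    have hfinal := hKσ j Kj hKj
    rw [hK2s] at hfinal
    have htri : |σs j| ≤ |b Kj j - σs j| + |b Kj j| := by
      have h' := abs_add_le (σs j - b Kj j) (b Kj j)
      simp only [sub_add_cancel] at h'
      calc |σs j| ≤ |σs j - b Kj j| + |b Kj j| := h'
        _ = |b Kj j - σs j| + |b Kj j| := by rw [abs_sub_comm]
    refine htri.trans ?_
    refine add_le_add hfinal ?_
    refine hb_bound.trans ?_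
    rw [hT1, hT2]
    linarith [hD3]
  -- final constants
  set C₂ : ℝ := 48 * (C + 1) * θ ^ (-(1:ℝ)/2) * cp + 2 * C * θ ^ n₀ + 8 * C * θ ^ n₀ with hC₂
  have hC₂0 : 0 ≤ C₂ := by
    rw [hC₂]
    positivity
  set θh : ℝ := max (max θ ν) ρ8 with hθh
  have hθh0 : 0 < θh := lt_of_lt_of_le hθ0 ((le_max_left θ ν).trans (le_max_left _ _))
  have hθh1 : θh < 1 := by
    rw [hθh]
    exact max_lt (max_lt hθ1 hν1) hρ81
  have hgeoh : ∀ (x : ℝ) (j : ℕ), 0 ≤ x → x ≤ θh → x ^ j ≤ θh ^ j := fun x j hx hxh =>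
    pow_le_pow_left₀ hx hxh j
  refine ⟨C₁ + C₂ + 1, by linarith, 1, one_pos, θh, ⟨hθh0, hθh1⟩, σs, ?_, htendK, ?_⟩
  · intro j K hK _
    have hb' := hKσ j K hK
    have hKs0 : (0:ℝ) ≤ K ^ (2 - s) := Real.rpow_nonneg (by linarith) _
    nlinarith [mul_nonneg hC₂0 hKs0, hKs0]
  · intro j
    have hd := hσ_decay j
    have hθν : θ ≤ θh := (le_max_left θ ν).trans (le_max_left _ _)
    have hq1h : q1 ^ j ≤ θh ^ j := hgeoh q1 j hq10 (hq1θ.trans hθν)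
    have hq2h : q2 ^ j ≤ θh ^ j := hgeoh q2 j hq20 (hq2θ.trans hθν)
    have hνh : ν ^ j ≤ θh ^ j := hgeoh ν j hν0 ((le_max_right θ ν).trans (le_max_left _ _))
    have hρh : ρ8 ^ j ≤ θh ^ j := hgeoh ρ8 j hρ80.le (le_max_right _ _)
    have hθh0j : (0:ℝ) ≤ θh ^ j := by positivity
    refine hd.trans ?_
    have c1 : (0:ℝ) ≤ 24 * (C + 1) * θ ^ (-(1:ℝ)/2) * cp := by positivity
    have c2 : (0:ℝ) ≤ C * θ ^ n₀ := by positivity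
    have c3 : (0:ℝ) ≤ 4 * C * θ ^ n₀ := by positivity
    have m1 := mul_le_mul_of_nonneg_left hρh c1
    have m2 := mul_le_mul_of_nonneg_left hq1h c2
    have m3 := mul_le_mul_of_nonneg_left hq2h c3
    have m0 := mul_le_mul_of_nonneg_left hνh hC₁0.le
    clear_value ν ρ8 q1 q2 θh C₁ C₂
    calc C₁ * ν ^ j + 2 * (24 * (C + 1) * θ ^ (-(1:ℝ)/2) * cp * ρ8 ^ j
          + C * θ ^ n₀ * q1 ^ j + 4 * C * θ ^ n₀ * q2 ^ j)
        ≤ C₁ * θh ^ j + 2 * (24 * (C + 1) * θ ^ (-(1:ℝ)/2) * cp * θh ^ j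
          + C * θ ^ n₀ * θh ^ j + 4 * C * θ ^ n₀ * θh ^ j) := by linarith
      _ = (C₁ + C₂) * θh ^ j := by
          rw [hC₂]
          ring
      _ ≤ (C₁ + C₂ + 1) * θh ^ j := by nlinarith [hθh0j]
end

section
/- Assume (H1)–(H3). Then there exists a constant C' depending only on C, u, θ and s such that for all integers m, j ≥ 0 and all K ≥ 1, |E[ξ̂_{m+j}^K ξ̂_m^K]| ≤ C' (m+j+1)^u K^{u+2} θ^{j/2}. -/
open MeasureTheory ProbabilityTheory Filter Topology

private lemma abs_int_le_int_abs {α : Type*} [MeasurableSpace α] (μ : MeasureTheory.Measure α)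
    (f : α → ℝ) : |∫ a, f a ∂μ| ≤ ∫ a, |f a| ∂μ := by
  simpa [Real.norm_eq_abs] using MeasureTheory.norm_integral_le_integral_norm (μ := μ) f

set_option maxHeartbeats 1000000

/-- Mixing bound for truncated variables: under (H1)–(H3) there is a constant `C'`
(depending only on `C, u, θ, s`) with
`|E[ξ̂_{m+j}^K ξ̂_m^K]| ≤ C' (m+j+1)^u K^{u+2} θ^{j/2}` for all `m, j ≥ 0` and `K ≥ 1`. -/
theorem truncated_mixing_bound
    {Ω : Type*} [MeasurableSpace Ω] (μ : MeasureTheory.Measure Ω) [IsProbabilityMeasure μ]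
    (C u θ s : ℝ) (hC : 0 < C) (hu : 0 < u) (hθ : θ ∈ Set.Ioo (0:ℝ) 1) (hs : 2 < s)
    (ξ : ℕ → Ω → ℝ) (hξ : ∀ n, Integrable (ξ n) μ)
    (ξhat : ℕ → Ω → ℝ) (hξhat : ∀ n ω, ξhat n ω = ξ n ω - ∫ ω', ξ n ω' ∂μ)
    (ξK : ℝ → ℕ → Ω → ℝ)
    (ξhatK : ℝ → ℕ → Ω → ℝ)
    (hξhatK : ∀ K n ω, ξhatK K n ω = ξK K n ω - ∫ ω', ξK K n ω' ∂μ)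
    -- (H1)
    (H1a : ∀ K, 1 ≤ K → ∀ n, ∀ᵐ ω ∂μ, |ξK K n ω| ≤ K)
    (H1b1 : ∀ K, 1 ≤ K → ∀ n, ∫ ω, |ξK K n ω - ξ n ω| ∂μ ≤ C * K ^ (1 - s))
    (H1b2 : ∀ K, 1 ≤ K → ∀ n, ∫ ω, (ξK K n ω - ξ n ω) ^ 2 ∂μ ≤ C * K ^ (2 - s))
    -- (H2)
    (F : ℕ → MeasurableSpace Ω) (hFmono : Monotone F) (hFle : ∀ l, F l ≤ ‹MeasurableSpace Ω›)
    (ξapp : ℝ → ℕ → ℕ → Ω → ℝ)   -- `ξapp K l k` is the variable `ξ_{l, l+k}^K`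
    (H2meas : ∀ K l k, 1 ≤ K → Measurable[F (l + k)] (ξapp K l k))
    (H2bdd : ∀ K l k, 1 ≤ K → ∀ᵐ ω ∂μ, |ξapp K l k ω| ≤ K)
    (H2exp : ∀ K l k, 1 ≤ K → ∫ ω, ξapp K l k ω ∂μ = ∫ ω, ξK K l ω ∂μ)
    (H2prob : ∀ K l k, 1 ≤ K →
      μ {ω | θ ^ k ≤ |ξK K l ω - ξapp K l k ω|} ≤
        ENNReal.ofReal (C * K ^ u * ((l : ℝ) + 1) ^ u * θ ^ k))
    -- (H3)
    (G : ℕ → ℕ → Set Ω) (hGmeas : ∀ l k, MeasurableSet (G l k))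
    (H3prob : ∀ l k, μ (G l k)ᶜ ≤ ENNReal.ofReal (C * θ ^ k))
    (H3 : ∀ K l k, 1 ≤ K → ∀ᵐ ω ∂μ, ω ∈ G l k →
      |(μ[ξhatK K (l + k)|F l]) ω| ≤ C * ((l : ℝ) + 1) ^ u * K ^ u * θ ^ k)
    :
    ∃ C' : ℝ, 0 < C' ∧
      ∀ (m j : ℕ) (K : ℝ), 1 ≤ K →
        |∫ ω, ξhatK K (m + j) ω * ξhatK K m ω ∂μ| ≤
          C' * ((m : ℝ) + j + 1) ^ u * K ^ (u + 2) * θ ^ ((j : ℝ) / 2) := by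

  obtain ⟨hθ0, hθ1⟩ := hθ
  have hθne : θ ≠ 0 := ne_of_gt hθ0
  -- a.e. strong measurability and integrability of the truncated variables
  have hmeasK : ∀ K n, 1 ≤ K → AEStronglyMeasurable (ξK K n) μ := by
    intro K n hK
    have hK0 : (0:ℝ) < K := lt_of_lt_of_le one_pos hK
    set s' : ℕ → Set Ω := fun k => {ω | θ ^ k ≤ |ξK K n ω - ξapp K n k ω|} with hs'
    have hsum : ∑' k, μ (s' k) ≠ ⊤ := by
      have hle : ∀ k, μ (s' k) ≤
          ENNReal.ofReal (C * K ^ u * ((n : ℝ) + 1) ^ u) * ENNReal.ofReal θ ^ k := by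
        intro k
        refine (H2prob K n k hK).trans (le_of_eq ?_)
        rw [← ENNReal.ofReal_pow hθ0.le, ← ENNReal.ofReal_mul (by positivity)]
      refine ne_top_of_le_ne_top ?_ (ENNReal.tsum_le_tsum hle)
      rw [ENNReal.tsum_mul_left, ENNReal.tsum_geometric]
      refine ENNReal.mul_ne_top ENNReal.ofReal_ne_top (ENNReal.inv_ne_top.mpr ?_)
      rw [Ne, tsub_eq_zero_iff_le, not_le]
      exact ENNReal.ofReal_lt_one.mpr hθ1
    have hBC := measure_limsup_atTop_eq_zero hsum
    have hae : ∀ᵐ ω ∂μ, Tendsto (fun k => ξapp K n k ω) atTop (𝓝 (ξK K n ω)) := by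
      have : ∀ᵐ ω ∂μ, ω ∉ limsup s' atTop := by
        rw [ae_iff]; simpa using hBC
      filter_upwards [this] with ω hω
      rw [mem_limsup_iff_frequently_mem, Filter.not_frequently] at hω
      rw [tendsto_iff_dist_tendsto_zero]
      refine squeeze_zero' (.of_forall fun k => dist_nonneg) ?_
        (tendsto_pow_atTop_nhds_zero_of_lt_one hθ0.le hθ1)
      filter_upwards [hω] with k hk
      rw [Real.dist_eq, abs_sub_comm]
      simp only [hs', Set.mem_setOf_eq, not_le] at hk
      exact hk.le
    exact (aemeasurable_of_tendsto_metrizable_ae atTop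
      (fun k => ((H2meas K n k hK).mono (hFle (n + k)) le_rfl).aemeasurable)
      hae).aestronglyMeasurable
  have hintK : ∀ K n, 1 ≤ K → Integrable (ξK K n) μ := by
    intro K n hK
    refine (integrable_const K).mono' (hmeasK K n hK) ?_
    filter_upwards [H1a K hK n] with ω hω
    simpa [Real.norm_eq_abs] using hω
  have hintapp : ∀ K l k, 1 ≤ K → Integrable (ξapp K l k) μ := by
    intro K l k hK
    refine (integrable_const K).mono'
      ((H2meas K l k hK).mono (hFle (l + k)) le_rfl).aestronglyMeasurable ?_
    filter_upwards [H2bdd K l k hK] with ω hω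
    simpa [Real.norm_eq_abs] using hω
  have habsintK : ∀ K n, 1 ≤ K → |∫ ω, ξK K n ω ∂μ| ≤ K := by
    intro K n hK
    calc |∫ ω, ξK K n ω ∂μ| ≤ ∫ ω, |ξK K n ω| ∂μ := abs_int_le_int_abs μ _
      _ ≤ ∫ _ω, K ∂μ :=
        integral_mono_ae (hintK K n hK).abs (integrable_const K) (H1a K hK n)
      _ = K := by simp
  have hhat_bdd : ∀ K n, 1 ≤ K → ∀ᵐ ω ∂μ, |ξhatK K n ω| ≤ 2 * K := by
    intro K n hK
    filter_upwards [H1a K hK n] with ω hω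
    rw [hξhatK]
    calc |ξK K n ω - ∫ ω', ξK K n ω' ∂μ| ≤ |ξK K n ω| + |∫ ω', ξK K n ω' ∂μ| :=
        abs_sub _ _
      _ ≤ K + K := add_le_add hω (habsintK K n hK)
      _ = 2 * K := by ring
  have hinthat : ∀ K n, 1 ≤ K → Integrable (ξhatK K n) μ := by
    intro K n hK
    have : ξhatK K n = fun ω => ξK K n ω - ∫ ω', ξK K n ω' ∂μ := funext (hξhatK K n)
    rw [this]
    exact (hintK K n hK).sub (integrable_const _)
  refine ⟨(10 * C + 2) / θ, by positivity, ?_⟩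
  intro m j K hK
  have hK0 : (0:ℝ) < K := lt_of_lt_of_le one_pos hK
  set k : ℕ := j / 2 with hkdef
  set k' : ℕ := j - j / 2 with hk'def
  set l : ℕ := m + k with hldef
  have hlk' : l + k' = m + j := by omega
  set A : Ω → ℝ := ξhatK K (m + j) with hA
  set B' : Ω → ℝ := fun ω => ξapp K m k ω - ∫ ω', ξK K m ω' ∂μ with hB'
  set dif : Ω → ℝ := fun ω => ξK K m ω - ξapp K m k ω with hdif
  have hintA : Integrable A μ := hinthat K (m + j) hK
  have hmeasB' : StronglyMeasurable[F l] B' :=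
    ((H2meas K m k hK).stronglyMeasurable).sub stronglyMeasurable_const
  have hB'_bdd : ∀ᵐ ω ∂μ, |B' ω| ≤ 2 * K := by
    filter_upwards [H2bdd K m k hK] with ω hω
    calc |B' ω| ≤ |ξapp K m k ω| + |∫ ω', ξK K m ω' ∂μ| := abs_sub _ _
      _ ≤ K + K := add_le_add hω (habsintK K m hK)
      _ = 2 * K := by ring
  have hA_bdd : ∀ᵐ ω ∂μ, |A ω| ≤ 2 * K := hhat_bdd K (m + j) hK
  have hintdif : Integrable dif μ := (hintK K m hK).sub (hintapp K m k hK)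
  have hintAdif : Integrable (fun ω => A ω * dif ω) μ := by
    refine hintdif.bdd_mul (c := 2 * K) hintA.aestronglyMeasurable ?_
    filter_upwards [hA_bdd] with ω hω
    simpa [Real.norm_eq_abs] using hω
  have hintB'A : Integrable (B' * A) μ := by
    refine hintA.bdd_mul (c := 2 * K) (hmeasB'.mono (hFle l)).aestronglyMeasurable ?_
    filter_upwards [hB'_bdd] with ω hω
    simpa [Real.norm_eq_abs] using hω
  have hintAB' : Integrable (fun ω => A ω * B' ω) μ := by
    have : (fun ω => A ω * B' ω) = B' * A := by funext ω; simp [mul_comm]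
    rw [this]; exact hintB'A
  -- decomposition of the integral
  have hdecomp : ∫ ω, ξhatK K (m + j) ω * ξhatK K m ω ∂μ
      = (∫ ω, A ω * dif ω ∂μ) + ∫ ω, A ω * B' ω ∂μ := by
    rw [← integral_add hintAdif hintAB']
    refine integral_congr_ae (.of_forall fun ω => ?_)
    simp only [hA, hB', hdif, hξhatK]
    ring
  -- Step 1 : the replacement error
  have hEbound : ∫ ω, |dif ω| ∂μ ≤ θ ^ k + 2 * K * (C * K ^ u * ((m : ℝ) + 1) ^ u * θ ^ k) := by
    obtain ⟨g, hgmeas, hgeq⟩ := hmeasK K m hK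
    set E' : Set Ω := {ω | θ ^ k ≤ |g ω - ξapp K m k ω|} with hE'
    have hE'meas : MeasurableSet E' := by
      have : Measurable fun ω => |g ω - ξapp K m k ω| :=
        (hgmeas.measurable.sub ((H2meas K m k hK).mono (hFle (m + k)) le_rfl)).abs
      exact measurableSet_le measurable_const this
    have hE'eq : μ E' = μ {ω | θ ^ k ≤ |ξK K m ω - ξapp K m k ω|} := by
      refine (measure_congr ?_).symm
      filter_upwards [hgeq] with ω hω
      change (θ ^ k ≤ |ξK K m ω - ξapp K m k ω|) = (θ ^ k ≤ |g ω - ξapp K m k ω|)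
      rw [hω]
    have hptwise : ∀ᵐ ω ∂μ, |dif ω| ≤ θ ^ k + E'.indicator (fun _ => 2 * K) ω := by
      filter_upwards [H1a K hK m, H2bdd K m k hK, hgeq] with ω h1 h2 h3
      by_cases hω : ω ∈ E'
      · rw [Set.indicator_of_mem hω]
        have : |dif ω| ≤ 2 * K := by
          calc |dif ω| ≤ |ξK K m ω| + |ξapp K m k ω| := abs_sub _ _
            _ ≤ K + K := add_le_add h1 h2
            _ = 2 * K := by ring
        have hθk : (0:ℝ) ≤ θ ^ k := by positivity
        linarith
      · rw [Set.indicator_of_notMem hω]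
        simp only [hE', Set.mem_setOf_eq, not_le, ← h3] at hω
        simpa [hdif] using le_of_lt (by linarith : |ξK K m ω - ξapp K m k ω| < θ ^ k + 0)
    have hintRHS : Integrable (fun ω => θ ^ k + E'.indicator (fun _ => 2 * K) ω) μ :=
      (integrable_const _).add ((integrable_const (2 * K)).indicator hE'meas)
    calc ∫ ω, |dif ω| ∂μ ≤ ∫ ω, (θ ^ k + E'.indicator (fun _ => 2 * K) ω) ∂μ :=
        integral_mono_ae hintdif.abs hintRHS hptwise
      _ = θ ^ k + (μ E').toReal * (2 * K) := by
        rw [integral_add (integrable_const _) ((integrable_const (2 * K)).indicator hE'meas)]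
        rw [integral_indicator_const _ hE'meas]
        simp [smul_eq_mul, measureReal_def]
      _ ≤ θ ^ k + (C * K ^ u * ((m : ℝ) + 1) ^ u * θ ^ k) * (2 * K) := by
        have : (μ E').toReal ≤ C * K ^ u * ((m : ℝ) + 1) ^ u * θ ^ k := by
          rw [hE'eq]
          exact ENNReal.toReal_le_of_le_ofReal (by positivity) (H2prob K m k hK)
        have h2K : (0:ℝ) ≤ 2 * K := by positivity
        nlinarith
      _ = θ ^ k + 2 * K * (C * K ^ u * ((m : ℝ) + 1) ^ u * θ ^ k) := by ring
  have hT1 : |∫ ω, A ω * dif ω ∂μ|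
      ≤ 2 * K * (θ ^ k + 2 * K * (C * K ^ u * ((m : ℝ) + 1) ^ u * θ ^ k)) := by
    calc |∫ ω, A ω * dif ω ∂μ| ≤ ∫ ω, |A ω * dif ω| ∂μ := abs_int_le_int_abs μ _
      _ ≤ ∫ ω, 2 * K * |dif ω| ∂μ := by
        refine integral_mono_ae hintAdif.abs (hintdif.abs.const_mul _) ?_
        filter_upwards [hA_bdd] with ω hω
        rw [abs_mul]
        exact mul_le_mul_of_nonneg_right hω (abs_nonneg _)
      _ = 2 * K * ∫ ω, |dif ω| ∂μ := integral_const_mul _ _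
      _ ≤ 2 * K * (θ ^ k + 2 * K * (C * K ^ u * ((m : ℝ) + 1) ^ u * θ ^ k)) :=
        mul_le_mul_of_nonneg_left hEbound (by positivity)
  -- Step 2 : the conditional-expectation term
  set h : Ω → ℝ := μ[A | F l] with hh
  have hinth : Integrable h μ := integrable_condExp
  have hcondbd : ∀ᵐ ω ∂μ, |h ω| ≤ 2 * K := by
    have h2K : ((2 * K).toNNReal : ℝ) = 2 * K := Real.coe_toNNReal _ (by positivity)
    have hb : ∀ᵐ ω ∂μ, |A ω| ≤ ((2 * K).toNNReal : ℝ) := by rw [h2K]; exact hA_bdd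
    have := ae_bdd_condExp_of_ae_bdd (m := F l) hb
    rw [h2K] at this
    exact this
  have hcondG : ∀ᵐ ω ∂μ, ω ∈ G l k' → |h ω| ≤ C * ((l : ℝ) + 1) ^ u * K ^ u * θ ^ k' := by
    have := H3 K l k' hK
    rw [hlk'] at this
    exact this
  have hT2 : |∫ ω, A ω * B' ω ∂μ|
      ≤ 2 * K * (C * ((l : ℝ) + 1) ^ u * K ^ u * θ ^ k' + 2 * K * (C * θ ^ k')) := by
    have hABeq : ∫ ω, A ω * B' ω ∂μ = ∫ ω, B' ω * h ω ∂μ := by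
      have e1 : ∫ ω, A ω * B' ω ∂μ = ∫ ω, (B' * A) ω ∂μ := by
        refine integral_congr_ae (.of_forall fun ω => ?_); simp [mul_comm]
      have e2 : ∫ ω, (B' * A) ω ∂μ = ∫ ω, (μ[B' * A | F l]) ω ∂μ :=
        (integral_condExp (hFle l)).symm
      have e3 : μ[B' * A | F l] =ᵐ[μ] B' * μ[A | F l] :=
        condExp_mul_of_stronglyMeasurable_left hmeasB' hintB'A hintA
      rw [e1, e2, integral_congr_ae e3]
      rfl
    have hintB'h : Integrable (B' * h) μ := by
      refine hinth.bdd_mul (c := 2 * K) (hmeasB'.mono (hFle l)).aestronglyMeasurable ?_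
      filter_upwards [hB'_bdd] with ω hω
      simpa [Real.norm_eq_abs] using hω
    have step1 : |∫ ω, B' ω * h ω ∂μ| ≤ 2 * K * ∫ ω, |h ω| ∂μ := by
      calc |∫ ω, B' ω * h ω ∂μ| ≤ ∫ ω, |B' ω * h ω| ∂μ := abs_int_le_int_abs μ _
        _ ≤ ∫ ω, 2 * K * |h ω| ∂μ := by
          refine integral_mono_ae hintB'h.abs (hinth.abs.const_mul _) ?_
          filter_upwards [hB'_bdd] with ω hω
          rw [abs_mul]
          exact mul_le_mul_of_nonneg_right hω (abs_nonneg _)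
        _ = 2 * K * ∫ ω, |h ω| ∂μ := integral_const_mul _ _
    have hsplit : ∫ ω, |h ω| ∂μ
        = (∫ ω in G l k', |h ω| ∂μ) + ∫ ω in (G l k')ᶜ, |h ω| ∂μ :=
      (integral_add_compl (hGmeas l k') hinth.abs).symm
    have honG : ∫ ω in G l k', |h ω| ∂μ ≤ C * ((l : ℝ) + 1) ^ u * K ^ u * θ ^ k' := by
      have hb : ∀ᵐ ω ∂(μ.restrict (G l k')), |h ω| ≤ C * ((l : ℝ) + 1) ^ u * K ^ u * θ ^ k' :=
        (ae_restrict_iff' (hGmeas l k')).mpr hcondG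
      calc ∫ ω in G l k', |h ω| ∂μ
          ≤ ∫ _ω in G l k', C * ((l : ℝ) + 1) ^ u * K ^ u * θ ^ k' ∂μ :=
            integral_mono_ae hinth.abs.restrict (integrable_const _) hb
        _ = (μ (G l k')).toReal * (C * ((l : ℝ) + 1) ^ u * K ^ u * θ ^ k') := by
            rw [setIntegral_const]; simp [smul_eq_mul, measureReal_def]
        _ ≤ 1 * (C * ((l : ℝ) + 1) ^ u * K ^ u * θ ^ k') := by
            refine mul_le_mul_of_nonneg_right ?_ (by positivity)
            exact (ENNReal.toReal_le_of_le_ofReal one_pos.le (by simpa using prob_le_one))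
        _ = C * ((l : ℝ) + 1) ^ u * K ^ u * θ ^ k' := one_mul _
    have honGc : ∫ ω in (G l k')ᶜ, |h ω| ∂μ ≤ 2 * K * (C * θ ^ k') := by
      have hb : ∀ᵐ ω ∂(μ.restrict (G l k')ᶜ), |h ω| ≤ 2 * K := ae_restrict_of_ae hcondbd
      calc ∫ ω in (G l k')ᶜ, |h ω| ∂μ ≤ ∫ _ω in (G l k')ᶜ, 2 * K ∂μ :=
            integral_mono_ae hinth.abs.restrict (integrable_const _) hb
        _ = (μ (G l k')ᶜ).toReal * (2 * K) := by rw [setIntegral_const]; simp [smul_eq_mul, measureReal_def]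
        _ ≤ (C * θ ^ k') * (2 * K) := by
            refine mul_le_mul_of_nonneg_right ?_ (by positivity)
            exact ENNReal.toReal_le_of_le_ofReal (by positivity) (H3prob l k')
        _ = 2 * K * (C * θ ^ k') := by ring
    calc |∫ ω, A ω * B' ω ∂μ| = |∫ ω, B' ω * h ω ∂μ| := by rw [hABeq]
      _ ≤ 2 * K * ∫ ω, |h ω| ∂μ := step1
      _ ≤ 2 * K * (C * ((l : ℝ) + 1) ^ u * K ^ u * θ ^ k' + 2 * K * (C * θ ^ k')) := by
        refine mul_le_mul_of_nonneg_left ?_ (by positivity)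
        rw [hsplit]
        exact add_le_add honG honGc
  -- Arithmetic : assemble the final bound
  set P : ℝ := ((m : ℝ) + j + 1) ^ u with hP
  set Q : ℝ := K ^ (u + 2) with hQ
  set H : ℝ := θ ^ ((j : ℝ) / 2) / θ with hH
  have hHpos : 0 < H := by
    have : (0:ℝ) < θ ^ ((j : ℝ) / 2) := Real.rpow_pos_of_pos hθ0 _
    positivity
  have hPpos : (0:ℝ) < P := by rw [hP]; positivity
  have hQpos : (0:ℝ) < Q := by rw [hQ]; positivity
  have hP1 : (1:ℝ) ≤ P := by
    rw [hP]
    have h0 : (0:ℝ) ≤ (m : ℝ) + j := by positivity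
    exact Real.one_le_rpow (by linarith) hu.le
  have hPm : ((m : ℝ) + 1) ^ u ≤ P := by
    refine Real.rpow_le_rpow (by positivity) ?_ hu.le
    have : (0:ℝ) ≤ (j : ℝ) := Nat.cast_nonneg j
    linarith
  have hPl : ((l : ℝ) + 1) ^ u ≤ P := by
    refine Real.rpow_le_rpow (by positivity) ?_ hu.le
    have : (l : ℝ) ≤ (m : ℝ) + j := by
      have : l ≤ m + j := by omega
      exact_mod_cast this
    linarith
  have hKQ : K ≤ Q := by
    calc K = K ^ (1:ℝ) := (Real.rpow_one K).symm
      _ ≤ K ^ (u + 2) := Real.rpow_le_rpow_of_exponent_le hK (by linarith)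
  have hK2Q : K * K ≤ Q := by
    calc K * K = K ^ (((2:ℕ) : ℝ)) := by rw [Real.rpow_natCast]; ring
      _ ≤ K ^ (u + 2) := Real.rpow_le_rpow_of_exponent_le hK (by push_cast; linarith)
  have hKuQ : K * K ^ u ≤ Q := by
    calc K * K ^ u = K ^ (u + 1) := by rw [Real.rpow_add hK0, Real.rpow_one]; ring
      _ ≤ K ^ (u + 2) := Real.rpow_le_rpow_of_exponent_le hK (by linarith)
  have hθkH : (θ:ℝ) ^ k ≤ H := by
    rw [hH, ← Real.rpow_natCast θ k]
    rw [div_eq_mul_inv, ← Real.rpow_neg_one θ, ← Real.rpow_add hθ0]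
    refine Real.rpow_le_rpow_of_exponent_ge hθ0 hθ1.le ?_
    have : (j : ℝ) ≤ 2 * k + 1 := by
      have : j ≤ 2 * k + 1 := by omega
      exact_mod_cast this
    linarith
  have hθk'H : (θ:ℝ) ^ k' ≤ H := by
    have h1 : (θ:ℝ) ^ k' ≤ θ ^ ((j : ℝ) / 2) := by
      rw [← Real.rpow_natCast θ k']
      refine Real.rpow_le_rpow_of_exponent_ge hθ0 hθ1.le ?_
      have : (j : ℝ) ≤ 2 * k' := by
        have : j ≤ 2 * k' := by omega
        exact_mod_cast this
      linarith
    refine h1.trans ?_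
    rw [hH, le_div_iff₀ hθ0]
    nlinarith [Real.rpow_pos_of_pos hθ0 ((j : ℝ) / 2)]
  -- bound the four elementary terms
  have hKuK : (0:ℝ) < K ^ u := Real.rpow_pos_of_pos hK0 _
  have b1 : 2 * (K * θ ^ k) ≤ 2 * (P * (Q * H)) := by
    have h1 : K * θ ^ k ≤ Q * H :=
      mul_le_mul hKQ hθkH (by positivity) hQpos.le
    have h2 : Q * H ≤ P * (Q * H) := le_mul_of_one_le_left (by positivity) hP1
    linarith
  have b2 : 4 * C * ((K * K * K ^ u) * (((m : ℝ) + 1) ^ u * θ ^ k))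
      ≤ 4 * C * (P * (Q * H)) := by
    refine mul_le_mul_of_nonneg_left ?_ (by positivity)
    have hmθ : ((m : ℝ) + 1) ^ u * θ ^ k ≤ P * H :=
      mul_le_mul hPm hθkH (by positivity) hPpos.le
    calc (K * K * K ^ u) * (((m : ℝ) + 1) ^ u * θ ^ k)
        ≤ (K * K * K ^ u) * (P * H) :=
          mul_le_mul_of_nonneg_left hmθ (by positivity)
      _ ≤ Q * (P * H) := by
          refine mul_le_mul_of_nonneg_right ?_ (by positivity)
          refine le_of_eq ?_
          rw [hQ, Real.rpow_add hK0, show (2:ℝ) = ((2:ℕ) : ℝ) by norm_num,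
            Real.rpow_natCast]
          ring
      _ = P * (Q * H) := by ring
  have b3 : 2 * C * ((K * K ^ u) * (((l : ℝ) + 1) ^ u * θ ^ k'))
      ≤ 2 * C * (P * (Q * H)) := by
    refine mul_le_mul_of_nonneg_left ?_ (by positivity)
    have hlθ : ((l : ℝ) + 1) ^ u * θ ^ k' ≤ P * H :=
      mul_le_mul hPl hθk'H (by positivity) hPpos.le
    calc (K * K ^ u) * (((l : ℝ) + 1) ^ u * θ ^ k')
        ≤ (K * K ^ u) * (P * H) := mul_le_mul_of_nonneg_left hlθ (by positivity)
      _ ≤ Q * (P * H) := mul_le_mul_of_nonneg_right hKuQ (by positivity)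
      _ = P * (Q * H) := by ring
  have b4 : 4 * C * ((K * K) * θ ^ k') ≤ 4 * C * (P * (Q * H)) := by
    refine mul_le_mul_of_nonneg_left ?_ (by positivity)
    calc (K * K) * θ ^ k' ≤ Q * H :=
        mul_le_mul hK2Q hθk'H (by positivity) hQpos.le
      _ ≤ P * (Q * H) := le_mul_of_one_le_left (by positivity) hP1
  have hfinal : |∫ ω, ξhatK K (m + j) ω * ξhatK K m ω ∂μ|
      ≤ (10 * C + 2) * (P * (Q * H)) := by
    have htot := abs_add_le (∫ ω, A ω * dif ω ∂μ) (∫ ω, A ω * B' ω ∂μ)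
    have : |∫ ω, ξhatK K (m + j) ω * ξhatK K m ω ∂μ|
        ≤ 2 * K * (θ ^ k + 2 * K * (C * K ^ u * ((m : ℝ) + 1) ^ u * θ ^ k))
          + 2 * K * (C * ((l : ℝ) + 1) ^ u * K ^ u * θ ^ k' + 2 * K * (C * θ ^ k')) := by
      rw [hdecomp]
      exact htot.trans (add_le_add hT1 hT2)
    have hexpand : 2 * K * (θ ^ k + 2 * K * (C * K ^ u * ((m : ℝ) + 1) ^ u * θ ^ k))
          + 2 * K * (C * ((l : ℝ) + 1) ^ u * K ^ u * θ ^ k' + 2 * K * (C * θ ^ k'))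
        = 2 * (K * θ ^ k)
          + 4 * C * ((K * K * K ^ u) * (((m : ℝ) + 1) ^ u * θ ^ k))
          + 2 * C * ((K * K ^ u) * (((l : ℝ) + 1) ^ u * θ ^ k'))
          + 4 * C * ((K * K) * θ ^ k') := by ring
    rw [hexpand] at this
    calc |∫ ω, ξhatK K (m + j) ω * ξhatK K m ω ∂μ|
        ≤ 2 * (K * θ ^ k)
          + 4 * C * ((K * K * K ^ u) * (((m : ℝ) + 1) ^ u * θ ^ k))
          + 2 * C * ((K * K ^ u) * (((l : ℝ) + 1) ^ u * θ ^ k'))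
          + 4 * C * ((K * K) * θ ^ k') := this
      _ ≤ 2 * (P * (Q * H)) + 4 * C * (P * (Q * H)) + 2 * C * (P * (Q * H))
          + 4 * C * (P * (Q * H)) := by linarith
      _ = (10 * C + 2) * (P * (Q * H)) := by ring
  refine hfinal.trans (le_of_eq ?_)
  rw [hH, hP, hQ]
  field_simp
end

section
/- Let 1 ≤ p ≤ q be integers and let N ≥ 1 be a real number with Np ≥ q. Then ∫_{ℝ^{d+r}} 1_{E_c(N)}(px, py) · 1_{E_c(N)}(qx, qy) dx dy = (c^r / q^{d+r}) · d · Vol(𝓑) · ln(Np/q). -/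
open MeasureTheory ProbabilityTheory Filter Topology

open Set Pointwise

noncomputable section

/-- `nrm` is a norm on `ℝ^d`. -/
def IsNorm {d : ℕ} (nrm : (Fin d → ℝ) → ℝ) : Prop :=
  (∀ x, nrm x = 0 ↔ x = 0) ∧ (∀ (t : ℝ) (x), nrm (t • x) = |t| * nrm x) ∧
    (∀ x y, nrm (x + y) ≤ nrm x + nrm y)

/-- The region `E_c(N) = {(x,y) ∈ ℝ^d × ℝ^r : |x| ∈ [1,N], |x|^{d/r} y_j ∈ [0,c] ∀j}`. -/
def Ec {d r : ℕ} (nrm : (Fin d → ℝ) → ℝ) (c N : ℝ) : Set ((Fin d → ℝ) × (Fin r → ℝ)) :=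
  {z | nrm z.1 ∈ Set.Icc 1 N ∧ ∀ j, nrm z.1 ^ ((d : ℝ) / (r : ℝ)) * z.2 j ∈ Set.Icc 0 c}

namespace AuxNrm

variable {d : ℕ} {nrm : (Fin d → ℝ) → ℝ}

theorem zero (h : IsNorm nrm) : nrm 0 = 0 := (h.1 0).2 rfl

theorem neg (h : IsNorm nrm) (x : Fin d → ℝ) : nrm (-x) = nrm x := by
  have := h.2.1 (-1) x; simp at this; simpa using this

theorem nonneg (h : IsNorm nrm) (x : Fin d → ℝ) : 0 ≤ nrm x := by
  have h1 : nrm (x + -x) ≤ nrm x + nrm (-x) := h.2.2 x (-x)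
  rw [neg h] at h1
  have h2 : nrm (x + -x) = 0 := (h.1 _).2 (by abel)
  linarith

theorem sum_le (h : IsNorm nrm) {ι : Type*} (s : Finset ι) (f : ι → (Fin d → ℝ)) :
    nrm (∑ i ∈ s, f i) ≤ ∑ i ∈ s, nrm (f i) := by
  classical
  induction s using Finset.cons_induction with
  | empty => simp [zero h]
  | cons a s ha ih =>
      rw [Finset.sum_cons, Finset.sum_cons]
      exact (h.2.2 _ _).trans (by linarith)

theorem exists_upper (h : IsNorm nrm) : ∃ C : ℝ, 0 ≤ C ∧ ∀ x, nrm x ≤ C * ‖x‖ := by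
  classical
  refine ⟨∑ i, nrm (fun j => if i = j then 1 else 0), Finset.sum_nonneg fun i _ => nonneg h _, fun x => ?_⟩
  have hx := pi_eq_sum_univ x
  calc nrm x = nrm (∑ i, x i • fun j => if i = j then (1:ℝ) else 0) := by rw [← hx]
    _ ≤ ∑ i, nrm (x i • fun j => if i = j then (1:ℝ) else 0) := sum_le h _ _
    _ = ∑ i, |x i| * nrm (fun j => if i = j then (1:ℝ) else 0) := by
        simp [h.2.1]
    _ ≤ ∑ i, ‖x‖ * nrm (fun j => if i = j then (1:ℝ) else 0) := by
        refine Finset.sum_le_sum fun i _ => ?_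
        exact mul_le_mul_of_nonneg_right (by simpa using norm_le_pi_norm x i) (nonneg h _)
    _ = ‖x‖ * ∑ i, nrm (fun j => if i = j then (1:ℝ) else 0) := by rw [← Finset.mul_sum]
    _ = (∑ i, nrm (fun j => if i = j then (1:ℝ) else 0)) * ‖x‖ := mul_comm _ _

theorem continuous (h : IsNorm nrm) : Continuous nrm := by
  obtain ⟨C, hC0, hC⟩ := exists_upper h
  refine (LipschitzWith.of_dist_le_mul (K := ⟨C, hC0⟩) fun x y => ?_).continuous
  have h1 : nrm x - nrm y ≤ nrm (x - y) := by
    have := h.2.2 (x - y) y; simp at this; linarith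
  have h2 : nrm y - nrm x ≤ nrm (x - y) := by
    have := h.2.2 (y - x) x; simp at this
    have hn : nrm (y - x) = nrm (x - y) := by rw [← neg h (x - y)]; ring_nf
    linarith [hn ▸ this]
  have : dist (nrm x) (nrm y) ≤ nrm (x - y) := by
    rw [Real.dist_eq]; exact abs_sub_le_iff.2 ⟨h1, h2⟩
  calc dist (nrm x) (nrm y) ≤ nrm (x - y) := this
    _ ≤ C * ‖x - y‖ := hC _
    _ = C * dist x y := by rw [dist_eq_norm]

theorem pos (h : IsNorm nrm) {x : Fin d → ℝ} (hx : x ≠ 0) : 0 < nrm x :=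
  lt_of_le_of_ne (nonneg h x) fun e => hx ((h.1 x).1 e.symm)

theorem exists_lower (hd : 1 ≤ d) (h : IsNorm nrm) : ∃ m : ℝ, 0 < m ∧ ∀ x, m * ‖x‖ ≤ nrm x := by
  haveI : Nonempty (Fin d) := ⟨⟨0, hd⟩⟩
  have hs : (Metric.sphere (0 : Fin d → ℝ) 1).Nonempty := by
    rw [NormedSpace.sphere_nonempty]; norm_num
  obtain ⟨z, hz, hmin'⟩ := (isCompact_sphere (0 : Fin d → ℝ) 1).exists_isMinOn hs
    ((continuous h).continuousOn)
  have hz1 : ‖z‖ = 1 := by simpa using hz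
  have hzpos : 0 < nrm z := pos h (by intro e; rw [e] at hz1; simp at hz1)
  refine ⟨nrm z, hzpos, fun x => ?_⟩
  rcases eq_or_ne x 0 with rfl | hx
  · simp [zero h]
  · have hxn : 0 < ‖x‖ := norm_pos_iff.2 hx
    have hu : (‖x‖⁻¹ • x) ∈ Metric.sphere (0 : Fin d → ℝ) 1 := by
      simp [norm_smul, abs_of_pos (inv_pos.2 hxn), inv_mul_cancel₀ hxn.ne']
    have := hmin' hu
    have he : nrm (‖x‖⁻¹ • x) = ‖x‖⁻¹ * nrm x := by
      rw [h.2.1]; rw [abs_of_pos (inv_pos.2 hxn)]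
    have hle : nrm z ≤ ‖x‖⁻¹ * nrm x := by rw [← he]; exact this
    calc nrm z * ‖x‖ ≤ (‖x‖⁻¹ * nrm x) * ‖x‖ := by nlinarith
      _ = nrm x := by field_simp

theorem measurable (h : IsNorm nrm) : Measurable nrm := (continuous h).measurable

theorem ball_meas (h : IsNorm nrm) (t : ℝ) : MeasurableSet {x : Fin d → ℝ | nrm x ≤ t} :=
  measurableSet_le (measurable h) measurable_const

theorem vol_ball_lt_top (hd : 1 ≤ d) (h : IsNorm nrm) {t : ℝ} :
    volume {x : Fin d → ℝ | nrm x ≤ t} < ⊤ := by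
  obtain ⟨m, hm, hml⟩ := exists_lower hd h
  have hsub : {x : Fin d → ℝ | nrm x ≤ t} ⊆ Metric.closedBall 0 (m⁻¹ * |t|) := by
    intro x hx
    simp only [Metric.mem_closedBall, dist_zero_right]
    have h1 := hml x
    have h2 : nrm x ≤ |t| := le_trans hx (le_abs_self t)
    rw [← inv_mul_cancel_left₀ hm.ne' ‖x‖]
    exact mul_le_mul_of_nonneg_left (by linarith) (inv_pos.2 hm).le
  exact lt_of_le_of_lt (measure_mono hsub) measure_closedBall_lt_top

theorem vol_ball (hd : 1 ≤ d) (h : IsNorm nrm) {t : ℝ} (ht : 0 ≤ t) :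
    volume {x : Fin d → ℝ | nrm x ≤ t} =
      ENNReal.ofReal (t ^ d) * volume {x : Fin d → ℝ | nrm x ≤ 1} := by
  haveI : Nonempty (Fin d) := ⟨⟨0, hd⟩⟩
  rcases eq_or_lt_of_le ht with rfl | ht
  · have : {x : Fin d → ℝ | nrm x ≤ 0} = {0} := by
      ext x
      simp only [Set.mem_setOf_eq, Set.mem_singleton_iff]
      constructor
      · intro hx; exact (h.1 x).1 (le_antisymm hx (nonneg h x))
      · rintro rfl; simp [zero h]
    rw [this, measure_singleton, zero_pow (by omega : d ≠ 0)]
    simp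
  · have hset : {x : Fin d → ℝ | nrm x ≤ t} = t • {x : Fin d → ℝ | nrm x ≤ 1} := by
      ext x
      rw [Set.mem_smul_set_iff_inv_smul_mem₀ ht.ne']
      simp only [Set.mem_setOf_eq, h.2.1, abs_of_pos (inv_pos.2 ht)]
      rw [inv_mul_le_iff₀ ht, mul_one]
    rw [hset, Measure.addHaar_smul_of_nonneg volume ht.le]
    congr 1
    simp [Module.finrank_pi]

theorem map_eq (hd : 1 ≤ d) (h : IsNorm nrm) :
    Measure.map nrm volume = volume.withDensity (fun t => (Set.Ioi (0:ℝ)).indicator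
      (fun t => ENNReal.ofReal ((d : ℝ) * (volume {x : Fin d → ℝ | nrm x ≤ 1}).toReal *
        t ^ (d - 1))) t) := by
  haveI : Nonempty (Fin d) := ⟨⟨0, hd⟩⟩
  set Vr : ℝ := (volume {x : Fin d → ℝ | nrm x ≤ 1}).toReal with hVr
  have hVr0 : 0 ≤ Vr := ENNReal.toReal_nonneg
  have hVfin : volume {x : Fin d → ℝ | nrm x ≤ 1} ≠ ⊤ := (vol_ball_lt_top hd h).ne
  have hVeq : volume {x : Fin d → ℝ | nrm x ≤ 1} = ENNReal.ofReal Vr :=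
    (ENNReal.ofReal_toReal hVfin).symm
  refine Measure.ext_of_Ioc' _ _ (fun a b hab => ?_) (fun a b hab => ?_)
  · rw [Measure.map_apply (measurable h) measurableSet_Ioc]
    refine (lt_of_le_of_lt (measure_mono ?_) (vol_ball_lt_top hd h (t := b))).ne
    intro x hx; exact hx.2
  · rw [Measure.map_apply (measurable h) measurableSet_Ioc,
      withDensity_apply _ measurableSet_Ioc, lintegral_indicator measurableSet_Ioi,
      Measure.restrict_restrict measurableSet_Ioi]
    rcases le_or_gt b 0 with hb | hb
    · have h1 : nrm ⁻¹' Set.Ioc a b ⊆ {(0 : Fin d → ℝ)} := by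
        intro x hx
        have := nonneg h x
        have hx0 : nrm x = 0 := le_antisymm (hx.2.trans hb) this
        exact Set.mem_singleton_iff.2 ((h.1 x).1 hx0)
      have h2 : Set.Ioi (0:ℝ) ∩ Set.Ioc a b = ∅ := by
        ext t; simp only [Set.mem_inter_iff, Set.mem_Ioi, Set.mem_Ioc, Set.mem_empty_iff_false,
          iff_false]
        rintro ⟨ht, _, htb⟩; linarith
      rw [h2]
      simp only [Measure.restrict_empty, lintegral_zero_measure]
      exact le_antisymm ((measure_mono h1).trans (by simp [measure_singleton])) (by positivity)
    · set a' : ℝ := max a 0 with ha'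
      have ha'b : a' ≤ b := max_le hab.le hb.le
      have hIoc : Set.Ioi (0:ℝ) ∩ Set.Ioc a b = Set.Ioc a' b := by
        ext t
        simp only [Set.mem_inter_iff, Set.mem_Ioi, Set.mem_Ioc, ha', max_lt_iff]
        tauto
      rw [hIoc]
      -- RHS computation
      have hcont : Continuous (fun t : ℝ => (d : ℝ) * Vr * t ^ (d - 1)) := continuous_const.mul (continuous_pow _)
      have hint : IntegrableOn (fun t : ℝ => (d : ℝ) * Vr * t ^ (d - 1)) (Set.Ioc a' b) volume :=
        (hcont.integrableOn_Ioc)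
      have hnn : 0 ≤ᵐ[volume.restrict (Set.Ioc a' b)]
          fun t : ℝ => (d : ℝ) * Vr * t ^ (d - 1) := by
        filter_upwards [ae_restrict_mem measurableSet_Ioc] with t ht
        have ht0 : 0 < t := lt_of_le_of_lt (le_max_right a 0) ht.1
        positivity
      have hRHS : ∫⁻ t in Set.Ioc a' b,
          ENNReal.ofReal ((d : ℝ) * Vr * t ^ (d - 1)) ∂volume
          = ENNReal.ofReal (Vr * (b ^ d - a' ^ d)) := by
        rw [← ofReal_integral_eq_lintegral_ofReal hint hnn]
        congr 1
        rw [← intervalIntegral.integral_of_le ha'b, intervalIntegral.integral_const_mul,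
          integral_pow]
        have hd1 : d - 1 + 1 = d := by omega
        rw [hd1]
        have hdpos : (0:ℝ) < d := by exact_mod_cast hd
        field_simp
        rw [Nat.cast_sub hd, Nat.cast_one]
        ring
      rw [hRHS]
      -- LHS computation
      have hkey : volume (nrm ⁻¹' Set.Ioc a b)
          = ENNReal.ofReal (b ^ d) * ENNReal.ofReal Vr
            - ENNReal.ofReal (a' ^ d) * ENNReal.ofReal Vr := by
        rcases le_or_gt 0 a with ha | ha
        · have ha'a : a' = a := max_eq_left ha
          have hseteq : nrm ⁻¹' Set.Ioc a b
              = {x : Fin d → ℝ | nrm x ≤ b} \ {x : Fin d → ℝ | nrm x ≤ a} := by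
            ext x
            simp only [Set.mem_preimage, Set.mem_Ioc, Set.mem_diff, Set.mem_setOf_eq]
            constructor
            · rintro ⟨h1, h2⟩; exact ⟨h2, by linarith⟩
            · rintro ⟨h1, h2⟩; exact ⟨by linarith [lt_of_not_ge h2], h1⟩
          have hsub : {x : Fin d → ℝ | nrm x ≤ a} ⊆ {x : Fin d → ℝ | nrm x ≤ b} :=
            fun x hx => le_trans hx hab.le
          rw [hseteq, measure_diff hsub (ball_meas h a).nullMeasurableSet
            (vol_ball_lt_top hd h).ne, vol_ball hd h (le_trans ha hab.le),
            vol_ball hd h ha, ha'a, hVeq]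
        · have ha'0 : a' = 0 := max_eq_right ha.le
          have hseteq : nrm ⁻¹' Set.Ioc a b = {x : Fin d → ℝ | nrm x ≤ b} := by
            ext x
            simp only [Set.mem_preimage, Set.mem_Ioc, Set.mem_setOf_eq]
            exact ⟨fun hx => hx.2, fun hx => ⟨lt_of_lt_of_le ha (nonneg h x), hx⟩⟩
          rw [hseteq, vol_ball hd h hb.le, ha'0, hVeq, zero_pow (by omega : d ≠ 0)]
          simp
      rw [hkey, ← ENNReal.ofReal_mul (by positivity), ← ENNReal.ofReal_mul (by positivity)]
      rw [mul_sub, ENNReal.ofReal_sub _ (by positivity)]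
      ring_nf

theorem radial (hd : 1 ≤ d) (h : IsNorm nrm) {a b : ℝ} (ha : 0 < a) (hab : a ≤ b)
    (C : ℝ) (hC : 0 ≤ C) :
    ∫⁻ x, (Set.Icc a b).indicator (fun s => ENNReal.ofReal (C * (s ^ d)⁻¹)) (nrm x)
      = ENNReal.ofReal (C * ((d : ℝ) * (volume {x : Fin d → ℝ | nrm x ≤ 1}).toReal *
          Real.log (b / a))) := by
  set Vr : ℝ := (volume {x : Fin d → ℝ | nrm x ≤ 1}).toReal with hVr
  have hVr0 : 0 ≤ Vr := ENNReal.toReal_nonneg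
  set f : ℝ → ENNReal := (Set.Icc a b).indicator (fun s => ENNReal.ofReal (C * (s ^ d)⁻¹))
    with hf
  have hfm : Measurable f :=
    (((measurable_id.pow_const d).inv.const_mul C).ennreal_ofReal).indicator measurableSet_Icc
  set ρ : ℝ → ENNReal := fun t => (Set.Ioi (0:ℝ)).indicator
      (fun t => ENNReal.ofReal ((d : ℝ) * Vr * t ^ (d - 1))) t with hρ
  have hρm : Measurable ρ :=
    (((measurable_id.pow_const (d-1)).const_mul _).ennreal_ofReal).indicator measurableSet_Ioi
  calc ∫⁻ x, f (nrm x) = ∫⁻ t, f t ∂(Measure.map nrm volume) :=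
        (lintegral_map hfm (measurable h)).symm
    _ = ∫⁻ t, ρ t * f t := by
        rw [map_eq hd h, lintegral_withDensity_eq_lintegral_mul volume hρm hfm]; rfl
    _ = ∫⁻ t, (Set.Icc a b).indicator
          (fun t => ENNReal.ofReal ((d:ℝ) * Vr * t ^ (d-1)) * ENNReal.ofReal (C * (t ^ d)⁻¹)) t := by
        congr 1; funext t
        by_cases ht : t ∈ Set.Icc a b
        · have ht0 : t ∈ Set.Ioi (0:ℝ) := lt_of_lt_of_le ha ht.1
          rw [hf]
          simp only [Set.indicator_of_mem ht, hρ, Set.indicator_of_mem ht0]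
        · rw [hf]; simp [Set.indicator_of_notMem ht]
    _ = ∫⁻ t in Set.Icc a b,
          ENNReal.ofReal ((d:ℝ) * Vr * t ^ (d-1)) * ENNReal.ofReal (C * (t ^ d)⁻¹) := by
        rw [lintegral_indicator measurableSet_Icc]
    _ = ∫⁻ t in Set.Ioc a b,
          ENNReal.ofReal ((d:ℝ) * Vr * t ^ (d-1)) * ENNReal.ofReal (C * (t ^ d)⁻¹) := by
        exact (setLIntegral_congr Ioc_ae_eq_Icc).symm
    _ = ∫⁻ t in Set.Ioc a b, ENNReal.ofReal (C * ((d:ℝ) * Vr) * t⁻¹) := by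
        refine lintegral_congr_ae ?_
        filter_upwards [ae_restrict_mem measurableSet_Ioc] with t ht
        have ht0 : 0 < t := lt_trans ha ht.1
        rw [← ENNReal.ofReal_mul (by positivity)]
        congr 1
        have h1 : (t:ℝ) ^ d = t ^ (d-1) * t := by
          conv_lhs => rw [show d = (d-1)+1 by omega]
          ring
        rw [h1]
        field_simp
    _ = ENNReal.ofReal (C * ((d : ℝ) * Vr * Real.log (b / a))) := by
        have hne : ∀ t ∈ Set.Icc a b, t ≠ 0 := fun t ht => (lt_of_lt_of_le ha ht.1).ne'
        have hcont : ContinuousOn (fun t : ℝ => C * ((d:ℝ) * Vr) * t⁻¹) (Set.Icc a b) :=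
          continuousOn_const.mul (continuousOn_id.inv₀ hne)
        have hint : IntegrableOn (fun t : ℝ => C * ((d:ℝ) * Vr) * t⁻¹) (Set.Ioc a b) volume :=
          (hcont.integrableOn_Icc).mono_set Set.Ioc_subset_Icc_self
        have hnn : 0 ≤ᵐ[volume.restrict (Set.Ioc a b)]
            fun t : ℝ => C * ((d:ℝ) * Vr) * t⁻¹ := by
          filter_upwards [ae_restrict_mem measurableSet_Ioc] with t ht
          have ht0 : 0 < t := lt_trans ha ht.1
          positivity
        rw [← ofReal_integral_eq_lintegral_ofReal hint hnn]
        congr 1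
        rw [← intervalIntegral.integral_of_le hab, intervalIntegral.integral_const_mul,
          integral_inv (by rw [Set.uIcc_of_le hab]; intro h0; exact (hne 0 h0) rfl)]
        ring

end AuxNrm

/-- For integers `1 ≤ p ≤ q` and `N ≥ 1` with `Np ≥ q`,
`∫ 1_{E_c(N)}(px, py) 1_{E_c(N)}(qx, qy) dx dy = (c^r/q^{d+r}) d Vol(𝓑) ln(Np/q)`. -/
theorem integral_dilated_indicators (d r : ℕ) (hd : 1 ≤ d) (hr : 1 ≤ r)
    (c : ℝ) (hc : 0 < c) (nrm : (Fin d → ℝ) → ℝ) (hnrm : IsNorm nrm)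
    (p q : ℕ) (hp : 1 ≤ p) (hpq : p ≤ q) (N : ℝ) (hN : 1 ≤ N) (hNpq : (q : ℝ) ≤ N * p) :
    ∫ z : (Fin d → ℝ) × (Fin r → ℝ),
        Set.indicator (Ec nrm c N) (fun _ => (1 : ℝ)) ((p : ℝ) • z) *
          Set.indicator (Ec nrm c N) (fun _ => (1 : ℝ)) ((q : ℝ) • z) =
      c ^ r / (q : ℝ) ^ (d + r) *
        (d * (volume {x : Fin d → ℝ | nrm x ≤ 1}).toReal * Real.log (N * p / q)) := by
  have hp0 : (0:ℝ) < p := by exact_mod_cast hp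
  have hq0 : (0:ℝ) < q := by exact_mod_cast lt_of_lt_of_le (by norm_num : (0:ℕ) < 1) (hp.trans hpq)
  have hpq' : (p:ℝ) ≤ q := by exact_mod_cast hpq
  have hr0 : (0:ℝ) < r := by exact_mod_cast hr
  have hd0 : (0:ℝ) < d := by exact_mod_cast hd
  have hdr : (0:ℝ) < (d:ℝ)/r := div_pos hd0 hr0
  set a : ℝ := 1/(p:ℝ) with haa
  set b : ℝ := N/(q:ℝ) with hbb
  have ha0 : 0 < a := by positivity
  have hab : a ≤ b := by
    rw [haa, hbb, div_le_div_iff₀ hp0 hq0, one_mul]; exact hNpq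
  set Vr : ℝ := (volume {x : Fin d → ℝ | nrm x ≤ 1}).toReal with hVr
  set S : Set ((Fin d → ℝ) × (Fin r → ℝ)) :=
    {z | nrm z.1 ∈ Set.Icc a b ∧
      ∀ j, ((q:ℝ) * nrm z.1) ^ ((d:ℝ)/(r:ℝ)) * ((q:ℝ) * z.2 j) ∈ Set.Icc 0 c} with hS
  -- membership characterization for dilations
  have hmem : ∀ (t : ℝ), 0 < t → ∀ z : (Fin d → ℝ) × (Fin r → ℝ),
      (t • z ∈ Ec nrm c N) ↔ (t * nrm z.1 ∈ Set.Icc 1 N ∧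
        ∀ j, (t * nrm z.1) ^ ((d:ℝ)/(r:ℝ)) * (t * z.2 j) ∈ Set.Icc 0 c) := by
    intro t ht z
    simp only [Ec, Set.mem_setOf_eq, Prod.smul_fst, Prod.smul_snd, Pi.smul_apply,
      smul_eq_mul, hnrm.2.1, abs_of_pos ht]
  -- S = intersection of the two dilated preimages
  have hAB : ∀ z : (Fin d → ℝ) × (Fin r → ℝ),
      z ∈ S ↔ ((p:ℝ) • z ∈ Ec nrm c N ∧ (q:ℝ) • z ∈ Ec nrm c N) := by
    intro z
    rw [hmem _ hp0, hmem _ hq0, hS]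
    set s := nrm z.1 with hsdef
    simp only [Set.mem_setOf_eq, Set.mem_Icc]
    constructor
    · rintro ⟨⟨hs1, hs2⟩, hj⟩
      have hs0 : 0 < s := lt_of_lt_of_le ha0 hs1
      have hqs : (q:ℝ) * s ≤ N := by
        rw [hbb] at hs2; rw [mul_comm]; exact (le_div_iff₀ hq0).1 hs2
      have hps1 : 1 ≤ (p:ℝ) * s := by
        rw [haa] at hs1
        have := (div_le_iff₀ hp0).1 hs1
        nlinarith
      have hpsqs : (p:ℝ) * s ≤ (q:ℝ) * s := mul_le_mul_of_nonneg_right hpq' hs0.le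
      have hE1 : (0:ℝ) < ((p:ℝ) * s) ^ ((d:ℝ)/(r:ℝ)) :=
        Real.rpow_pos_of_pos (by positivity) _
      have hE2 : (0:ℝ) < ((q:ℝ) * s) ^ ((d:ℝ)/(r:ℝ)) :=
        Real.rpow_pos_of_pos (by positivity) _
      have hE12 : ((p:ℝ) * s) ^ ((d:ℝ)/(r:ℝ)) ≤ ((q:ℝ) * s) ^ ((d:ℝ)/(r:ℝ)) :=
        Real.rpow_le_rpow (by positivity) hpsqs hdr.le
      refine ⟨⟨⟨hps1, hpsqs.trans hqs⟩, fun j => ?_⟩,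
        ⟨⟨le_trans hps1 hpsqs, hqs⟩, hj⟩⟩
      obtain ⟨hj1, hj2⟩ := hj j
      rw [← hsdef] at hj1 hj2
      have hy0 : 0 ≤ z.2 j := by
        by_contra hy
        push_neg at hy
        have h1 : ((q:ℝ) * s) ^ ((d:ℝ)/(r:ℝ)) * ((q:ℝ) * z.2 j) < 0 :=
          mul_neg_of_pos_of_neg hE2 (mul_neg_of_pos_of_neg hq0 hy)
        linarith
      constructor
      · positivity
      · have hk1 : ((p:ℝ)*s)^((d:ℝ)/(r:ℝ)) * ((p:ℝ) * z.2 j)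
            ≤ ((q:ℝ)*s)^((d:ℝ)/(r:ℝ)) * ((q:ℝ) * z.2 j) :=
          mul_le_mul hE12 (mul_le_mul_of_nonneg_right hpq' hy0) (by positivity) hE2.le
        linarith
    · rintro ⟨⟨⟨hp1, _⟩, _⟩, ⟨⟨_, hq2⟩, hj⟩⟩
      have hs0 : 0 ≤ s := AuxNrm.nonneg hnrm z.1
      refine ⟨⟨?_, ?_⟩, hj⟩
      · rw [haa, div_le_iff₀ hp0, mul_comm]; linarith
      · rw [hbb, le_div_iff₀ hq0, mul_comm] at *; linarith
  -- measurability of S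
  have hScont1 : Continuous fun z : (Fin d → ℝ) × (Fin r → ℝ) => nrm z.1 :=
    (AuxNrm.continuous hnrm).comp continuous_fst
  have hrpow : Continuous fun x : ℝ => x ^ ((d:ℝ)/(r:ℝ)) := by
    rw [continuous_iff_continuousAt]
    exact fun x => Real.continuousAt_rpow_const x _ (Or.inr hdr.le)
  have hSmeas : MeasurableSet S := by
    rw [hS, Set.setOf_and, Set.setOf_forall]
    apply MeasurableSet.inter
    · exact (hScont1.measurable) measurableSet_Icc
    · refine MeasurableSet.iInter fun j => ?_
      have : Continuous fun z : (Fin d → ℝ) × (Fin r → ℝ) =>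
          ((q:ℝ) * nrm z.1) ^ ((d:ℝ)/(r:ℝ)) * ((q:ℝ) * z.2 j) :=
        (hrpow.comp (continuous_const.mul hScont1)).mul
          (continuous_const.mul ((continuous_apply j).comp continuous_snd))
      exact this.measurable measurableSet_Icc
  -- rewrite the integrand as the indicator of S
  have hintegrand : (fun z : (Fin d → ℝ) × (Fin r → ℝ) =>
      Set.indicator (Ec nrm c N) (fun _ => (1 : ℝ)) ((p : ℝ) • z) *
        Set.indicator (Ec nrm c N) (fun _ => (1 : ℝ)) ((q : ℝ) • z)) =
      S.indicator (fun _ => (1:ℝ)) := by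
    funext z
    by_cases hz : z ∈ S
    · rw [Set.indicator_of_mem hz, Set.indicator_of_mem ((hAB z).1 hz).1,
        Set.indicator_of_mem ((hAB z).1 hz).2, mul_one]
    · rw [Set.indicator_of_notMem hz]
      by_cases hz1 : (p:ℝ) • z ∈ Ec nrm c N
      · by_cases hz2 : (q:ℝ) • z ∈ Ec nrm c N
        · exact absurd ((hAB z).2 ⟨hz1, hz2⟩) hz
        · rw [Set.indicator_of_notMem hz2, mul_zero]
      · rw [Set.indicator_of_notMem hz1, zero_mul]
  rw [hintegrand]
  have hone : S.indicator (fun _ => (1:ℝ))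
      = S.indicator (1 : ((Fin d → ℝ) × (Fin r → ℝ)) → ℝ) := rfl
  rw [hone, MeasureTheory.integral_indicator_one hSmeas]
  -- compute the volume of S
  set C : ℝ := c ^ r / (q:ℝ) ^ (d + r) with hC
  have hC0 : 0 ≤ C := by positivity
  have hvolS : volume S = ENNReal.ofReal (C * ((d:ℝ) * Vr * Real.log (b / a))) := by
    rw [Measure.volume_eq_prod, Measure.prod_apply hSmeas]
    have hslice : ∀ x : Fin d → ℝ, volume (Prod.mk x ⁻¹' S) =
        (Set.Icc a b).indicator (fun s => ENNReal.ofReal (C * (s ^ d)⁻¹)) (nrm x) := by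
      intro x
      by_cases hx : nrm x ∈ Set.Icc a b
      · set s := nrm x with hsdef
        have hs0 : 0 < s := lt_of_lt_of_le ha0 hx.1
        set M : ℝ := ((q:ℝ) * s) ^ ((d:ℝ)/(r:ℝ)) * q with hM
        have hM0 : 0 < M := mul_pos (Real.rpow_pos_of_pos (by positivity) _) hq0
        have hslice_eq : Prod.mk x ⁻¹' S = Set.pi Set.univ (fun _ : Fin r => Set.Icc 0 (c/M)) := by
          ext y
          simp only [Set.mem_preimage, hS, Set.mem_setOf_eq, Set.mem_pi, Set.mem_univ,
            forall_true_left, Set.mem_Icc]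
          constructor
          · rintro ⟨_, hj⟩ j
            obtain ⟨h1, h2⟩ := hj j
            rw [← mul_assoc, ← hM] at h1 h2
            exact ⟨nonneg_of_mul_nonneg_right h1 hM0, (le_div_iff₀' hM0).2 h2⟩
          · intro hj
            refine ⟨hx, fun j => ?_⟩
            obtain ⟨h1, h2⟩ := hj j
            rw [← mul_assoc, ← hM]
            exact ⟨mul_nonneg hM0.le h1, (le_div_iff₀' hM0).1 h2⟩
        rw [hslice_eq, MeasureTheory.volume_pi_pi, Set.indicator_of_mem hx]
        have hMr : M ^ r = (q:ℝ) ^ (d + r) * s ^ d := by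
          rw [hM, mul_pow, ← Real.rpow_natCast (((q:ℝ) * s) ^ ((d:ℝ)/(r:ℝ))) r,
            ← Real.rpow_mul (by positivity), div_mul_cancel₀ _ hr0.ne',
            Real.rpow_natCast, mul_pow, pow_add]
          ring
        have hcM : (c/M) ^ r = C * (s ^ d)⁻¹ := by
          rw [div_pow, hMr, hC]
          field_simp
        simp only [Real.volume_Icc, sub_zero, Finset.prod_const, Finset.card_univ,
          Fintype.card_fin]
        rw [← ENNReal.ofReal_pow (by positivity), hcM]
      · have hslice_eq : Prod.mk x ⁻¹' S = ∅ := by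
          ext y
          simp only [Set.mem_preimage, hS, Set.mem_setOf_eq, Set.mem_empty_iff_false, iff_false]
          rintro ⟨h1, _⟩; exact hx h1
        rw [hslice_eq, Set.indicator_of_notMem hx, measure_empty]
    calc ∫⁻ x, volume (Prod.mk x ⁻¹' S)
        = ∫⁻ x, (Set.Icc a b).indicator (fun s => ENNReal.ofReal (C * (s ^ d)⁻¹)) (nrm x) := by
          exact lintegral_congr hslice
      _ = ENNReal.ofReal (C * ((d:ℝ) * Vr * Real.log (b / a))) :=
          AuxNrm.radial hd hnrm ha0 hab C hC0
  rw [measureReal_def, hvolS, ENNReal.toReal_ofReal]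
  · have hba : b / a = N * p / q := by
      rw [haa, hbb]; field_simp
    rw [hba, hC]
  · have hlog : 0 ≤ Real.log (b / a) :=
      Real.log_nonneg ((one_le_div ha0).2 hab)
    positivity

end
end
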